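/- arXiv:1204.5561 — 2 statements merged into one kernel-verified Lean document; each statement's English description precedes it below -/
import Mathlib

section
/- Every finite simple graph belonging to the class SQC is vertex decomposable. -/
open SimpleGraph

variable {V : Type*} {W : Type*}

/-- The open neighborhood `N(x)` of a vertex, as a set. -/
def nbhd (G : SimpleGraph V) (x : V) : Set V := {u | G.Adj x u}

/-- The closed neighborhood `N[x]` of a vertex. -/
def closedNbhd (G : SimpleGraph V) (x : V) : Set V := insert x {u | G.Adj x u}

/-- The degree of a vertex. -/
noncomputable def deg (G : SimpleGraph V) (x : V) : ℕ := (nbhd G x).ncard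

/-- `S` is an independent set of vertices of `G`. -/
def IsIndep (G : SimpleGraph V) (S : Set V) : Prop :=
  ∀ u ∈ S, ∀ w ∈ S, ¬ G.Adj u w

/-- `S` is an independent set contained in `A`, i.e. an independent set of the
induced subgraph of `G` on `A`. -/
def IsIndepOn (G : SimpleGraph V) (A S : Set V) : Prop :=
  S ⊆ A ∧ IsIndep G S

/-- `S` is a maximal independent set of the induced subgraph of `G` on `A`. -/
def IsMaxIndepOn (G : SimpleGraph V) (A S : Set V) : Prop :=
  IsIndepOn G A S ∧ ∀ T : Set V, IsIndepOn G A T → S ⊆ T → S = T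

/-- A graph is well-covered if all its maximal independent sets have the same
cardinality. -/
def WellCovered (G : SimpleGraph V) : Prop :=
  ∀ S T : Set V, IsMaxIndepOn G Set.univ S → IsMaxIndepOn G Set.univ T →
    S.ncard = T.ncard

/-- The independence number `α(G)` of a graph. -/
noncomputable def indepNum (G : SimpleGraph V) : ℕ :=
  sSup {n : ℕ | ∃ S : Set V, IsIndep G S ∧ S.ncard = n}

/-- `VDOn G A` means: the induced subgraph of `G` on `A` is vertex decomposable,
via the recursive graph-theoretic characterization: it has no edges, or there is
a vertex `v ∈ A` such that both `G∖v` and `G∖N[v]` (within `A`) are vertex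
decomposable and no independent set of `G∖N[v]` is a maximal independent set
of `G∖v`. -/
inductive VDOn (G : SimpleGraph V) : Set V → Prop
  | no_edges (A : Set V) (h : ∀ u ∈ A, ∀ w ∈ A, ¬ G.Adj u w) : VDOn G A
  | step (A : Set V) (v : V) (hv : v ∈ A)
      (hdel : VDOn G (A \ {v}))
      (hlk : VDOn G (A \ closedNbhd G v))
      (hshed : ∀ S : Set V, IsIndepOn G (A \ closedNbhd G v) S →
        ¬ IsMaxIndepOn G (A \ {v}) S) : VDOn G A

/-- A graph is vertex decomposable. -/
def VertexDecomposable (G : SimpleGraph V) : Prop := VDOn G Set.univ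

/-- `c` lists the vertices of an `n`-cycle of `G` in cyclic order. -/
def IsCycleMap {n : ℕ} (G : SimpleGraph V) (c : ZMod n → V) : Prop :=
  Function.Injective c ∧ ∀ i : ZMod n, G.Adj (c i) (c (i + 1))

/-- A vertex is simplicial if its closed neighborhood induces a complete graph. -/
def IsSimplicial (G : SimpleGraph V) (x : V) : Prop :=
  ∀ u w : V, G.Adj x u → G.Adj x w → u ≠ w → G.Adj u w

/-- A basic 5-cycle: a 5-cycle containing no two adjacent vertices that both
have degree at least 3 in `G`. -/
def IsBasic5Cycle (G : SimpleGraph V) (c : ZMod 5 → V) : Prop :=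
  IsCycleMap G c ∧ ∀ i : ZMod 5, ¬(3 ≤ deg G (c i) ∧ 3 ≤ deg G (c (i + 1)))

/-- A basic 3-cycle: a 3-cycle containing at least one vertex of degree 2. -/
def IsBasic3Cycle (G : SimpleGraph V) (c : ZMod 3 → V) : Prop :=
  IsCycleMap G c ∧ ∃ i : ZMod 3, deg G (c i) = 2

/-- `x` belongs to a simplex of `G`, i.e. to the closed neighborhood of a
simplicial vertex. -/
def InSimplex (G : SimpleGraph V) (x : V) : Prop :=
  ∃ v : V, IsSimplicial G v ∧ x ∈ closedNbhd G v

/-- `x` lies on a basic 5-cycle of `G`. -/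
def OnBasic5Cycle (G : SimpleGraph V) (x : V) : Prop :=
  ∃ c : ZMod 5 → V, IsBasic5Cycle G c ∧ x ∈ Set.range c

/-- A basic 4-cycle, labelled so that `c 0` and `c 1` are two adjacent vertices
of degree two, and the remaining two vertices `c 2`, `c 3` each belong to a
simplex or to a basic 5-cycle of `G`.  The set `B(Q)` of such a labelled basic
4-cycle is `{c 0, c 1}`. -/
def IsBasic4Cycle (G : SimpleGraph V) (c : ZMod 4 → V) : Prop :=
  IsCycleMap G c ∧ deg G (c 0) = 2 ∧ deg G (c 1) = 2 ∧
    (InSimplex G (c 2) ∨ OnBasic5Cycle G (c 2)) ∧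
    (InSimplex G (c 3) ∨ OnBasic5Cycle G (c 3))

/-- The class `SQC`: the vertex set is partitioned by the closed neighborhoods
of `m` simplicial vertices, the vertex sets of `s` basic 5-cycles and the sets
`B(Q)` of `t` basic 4-cycles. -/
def InSQC (G : SimpleGraph V) : Prop :=
  ∃ (m s t : ℕ) (x : Fin m → V) (c : Fin s → ZMod 5 → V) (q : Fin t → ZMod 4 → V),
    (∀ i, IsSimplicial G (x i)) ∧
    (∀ j, IsBasic5Cycle G (c j)) ∧
    (∀ k, IsBasic4Cycle G (q k)) ∧
    (∀ v : V, ∃! p : Fin m ⊕ Fin s ⊕ Fin t,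
      match p with
      | Sum.inl i => v ∈ closedNbhd G (x i)
      | Sum.inr (Sum.inl j) => v ∈ Set.range (c j)
      | Sum.inr (Sum.inr k) => v = q k 0 ∨ v = q k 1)

/-- The class `SC`: the vertex set is partitioned by the closed neighborhoods
of `m` simplicial vertices and the vertex sets of `s` basic 5-cycles. -/
def InSC (G : SimpleGraph V) : Prop :=
  ∃ (m s : ℕ) (x : Fin m → V) (c : Fin s → ZMod 5 → V),
    (∀ i, IsSimplicial G (x i)) ∧
    (∀ j, IsBasic5Cycle G (c j)) ∧
    (∀ v : V, ∃! p : Fin m ⊕ Fin s,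
      match p with
      | Sum.inl i => v ∈ closedNbhd G (x i)
      | Sum.inr j => v ∈ Set.range (c j))

/-- `{u, w}` is a pendant edge of `G`: an edge incident with a vertex of
degree 1. -/
def PendantEdge (G : SimpleGraph V) (u w : V) : Prop :=
  G.Adj u w ∧ (deg G u = 1 ∨ deg G w = 1)

/-- `P(G)`: vertices incident with pendant edges. -/
def pendantVerts (G : SimpleGraph V) : Set V := {v | ∃ u, PendantEdge G v u}

/-- `C(G)`: vertices lying on basic 5-cycles. -/
def basic5Verts (G : SimpleGraph V) : Set V := {v | OnBasic5Cycle G v}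

/-- The class `PC`: `V(G) = P(G) ∪ C(G)` with `P(G) ∩ C(G) = ∅`, the basic
5-cycles partition `C(G)` (i.e. are pairwise vertex-disjoint), and the pendant
edges form a perfect matching of `P(G)`. -/
def InPC (G : SimpleGraph V) : Prop :=
  pendantVerts G ∪ basic5Verts G = Set.univ ∧
  pendantVerts G ∩ basic5Verts G = ∅ ∧
  (∀ c c' : ZMod 5 → V, IsBasic5Cycle G c → IsBasic5Cycle G c' →
    Set.range c = Set.range c' ∨ Disjoint (Set.range c) (Set.range c')) ∧
  (∀ v ∈ pendantVerts G, ∃! u : V, PendantEdge G v u)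

/-- The induced subgraph of `G` on `B` has no cut vertex: removing any vertex
of `B` leaves it (pre)connected. -/
def NoCutVertexOn (G : SimpleGraph V) (B : Set V) : Prop :=
  ∀ v ∈ B, (G.induce (B \ {v})).Preconnected

/-- `B` is (the vertex set of) a block of `G`: a maximal connected induced
subgraph without a cut vertex. -/
def IsBlockOf (G : SimpleGraph V) (B : Set V) : Prop :=
  B.Nonempty ∧ (G.induce B).Connected ∧ NoCutVertexOn G B ∧
  ∀ B' : Set V, B ⊆ B' → (G.induce B').Connected → NoCutVertexOn G B' → B' = B

/-- The induced subgraph of `G` on `B` is complete. -/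
def IsCompleteOn (G : SimpleGraph V) (B : Set V) : Prop :=
  ∀ u ∈ B, ∀ w ∈ B, u ≠ w → G.Adj u w

/-- The induced subgraph of `G` on `B` is a cycle. -/
def IsCycleOn (G : SimpleGraph V) (B : Set V) : Prop :=
  ∃ n : ℕ, 3 ≤ n ∧ ∃ c : ZMod n → V, Function.Injective c ∧ Set.range c = B ∧
    ∀ i j : ZMod n, G.Adj (c i) (c j) ↔ (j = i + 1 ∨ i = j + 1)

/-- A block-cactus graph: every block is complete or a cycle. -/
def IsBlockCactus (G : SimpleGraph V) : Prop :=
  ∀ B : Set V, IsBlockOf G B → IsCompleteOn G B ∨ IsCycleOn G B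

/-- A cactus graph: connected, and any two (distinct) cycles have at most one
vertex in common. -/
def IsCactus (G : SimpleGraph V) : Prop :=
  G.Connected ∧
  ∀ (n m : ℕ), 3 ≤ n → 3 ≤ m → ∀ (c : ZMod n → V) (c' : ZMod m → V),
    IsCycleMap G c → IsCycleMap G c' →
    Set.range c = Set.range c' ∨ (Set.range c ∩ Set.range c').Subsingleton

/-- `S` is a pendant edge of `G` incident with `v`. -/
def IncidentPendant (G : SimpleGraph V) (v : V) (S : Set V) : Prop :=
  ∃ u, PendantEdge G v u ∧ S = {v, u}

/-- `S` is (the vertex set of) a basic 3-cycle of `G` through `v`. -/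
def IncidentBasic3 (G : SimpleGraph V) (v : V) (S : Set V) : Prop :=
  ∃ c : ZMod 3 → V, IsBasic3Cycle G c ∧ Set.range c = S ∧ v ∈ S

/-- `S` is (the vertex set of) a basic 4-cycle of `G` through `v`. -/
def IncidentBasic4 (G : SimpleGraph V) (v : V) (S : Set V) : Prop :=
  ∃ c : ZMod 4 → V, IsBasic4Cycle G c ∧ Set.range c = S ∧ v ∈ S

/-- `S` is (the vertex set of) a basic 5-cycle of `G` through `v`. -/
def IncidentBasic5 (G : SimpleGraph V) (v : V) (S : Set V) : Prop :=
  ∃ c : ZMod 5 → V, IsBasic5Cycle G c ∧ Set.range c = S ∧ v ∈ S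

/-- `H` is a minor of `G`, witnessed by pairwise disjoint connected branch
sets. -/
def IsMinorOf (H : SimpleGraph W) (G : SimpleGraph V) : Prop :=
  ∃ f : W → Set V,
    (∀ w, (G.induce (f w)).Connected) ∧
    (∀ w w', w ≠ w' → Disjoint (f w) (f w')) ∧
    (∀ w w', H.Adj w w' → ∃ a ∈ f w, ∃ b ∈ f w', G.Adj a b)

/-- Planarity, via Wagner's characterization: a graph is planar iff it has
neither `K₅` nor `K₃,₃` as a minor. -/
def IsPlanar (G : SimpleGraph V) : Prop :=
  ¬ IsMinorOf (⊤ : SimpleGraph (Fin 5)) G ∧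
  ¬ IsMinorOf (completeBipartiteGraph (Fin 3) (Fin 3)) G

/-- The class `W₂`: a well-covered graph such that deleting any vertex leaves a
well-covered graph with the same independence number. -/
def InW2 (G : SimpleGraph V) : Prop :=
  WellCovered G ∧ ∀ x : V,
    WellCovered (G.induce ({x}ᶜ : Set V)) ∧
    _root_.indepNum (G.induce ({x}ᶜ : Set V)) = _root_.indepNum G

/-- The edge relation of the graph `G_n`, on vertex labels `1, …, 3n-1`
(the vertex `x_i` has label `i`). -/
def gnRel (n : ℕ) (a b : ℕ) : Prop :=
  (a = 1 ∧ b = 2) ∨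
  (∃ k : ℕ, 1 ≤ k ∧ k ≤ n - 1 ∧
    ((a = 3 * k - 1 ∧ b = 3 * k) ∨ (a = 3 * k ∧ b = 3 * k + 1) ∨
     (a = 3 * k + 1 ∧ b = 3 * k + 2) ∨ (a = 3 * k + 2 ∧ b = 3 * k - 2))) ∨
  (∃ l : ℕ, 2 ≤ l ∧ l ≤ n - 1 ∧ a = 3 * l - 3 ∧ b = 3 * l)

/-- The graph `G_n`, with vertex set `{x_1, …, x_{3n-1}}`; the vertex `x_i` is
represented by the element of `Fin (3*n-1)` with value `i - 1`. -/
def Gn (n : ℕ) : SimpleGraph (Fin (3 * n - 1)) :=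
  SimpleGraph.fromRel (fun a b => gnRel n (a.1 + 1) (b.1 + 1))

/-- The graph `H_n = G_n ∖ x_{3n-1}`, with vertex set `{x_1, …, x_{3n-2}}`;
the vertex `x_i` is represented by the element of `Fin (3*n-2)` with value
`i - 1`. -/
def Hn (n : ℕ) : SimpleGraph (Fin (3 * n - 2)) :=
  SimpleGraph.fromRel (fun a b => gnRel n (a.1 + 1) (b.1 + 1))

section AuxSQC

variable {G : SimpleGraph V} {A B W' : Set V}

/-- relative open neighborhood -/
def nbhdOn (G : SimpleGraph V) (A : Set V) (x : V) : Set V := {u | u ∈ A ∧ G.Adj x u}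
noncomputable def degOn (G : SimpleGraph V) (A : Set V) (x : V) : ℕ := (nbhdOn G A x).ncard
def cnbOn (G : SimpleGraph V) (A : Set V) (x : V) : Set V := insert x (nbhdOn G A x)

def SimplicialOn (G : SimpleGraph V) (A : Set V) (x : V) : Prop :=
  ∀ u ∈ nbhdOn G A x, ∀ w ∈ nbhdOn G A x, u ≠ w → G.Adj u w

def SimPartOn (G : SimpleGraph V) (A S : Set V) : Prop :=
  ∃ x ∈ A, SimplicialOn G A x ∧ S = cnbOn G A x

def Basic5On (G : SimpleGraph V) (A : Set V) (c : ZMod 5 → V) : Prop :=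
  (∀ i, c i ∈ A) ∧ Function.Injective c ∧ (∀ i, G.Adj (c i) (c (i+1))) ∧
  (∀ i, ¬(3 ≤ degOn G A (c i) ∧ 3 ≤ degOn G A (c (i+1))))

def CycPartOn (G : SimpleGraph V) (A S : Set V) : Prop :=
  ∃ c, Basic5On G A c ∧ S = Set.range c

def Basic4On (G : SimpleGraph V) (A : Set V) (q : ZMod 4 → V) : Prop :=
  (∀ i, q i ∈ A) ∧ Function.Injective q ∧ (∀ i, G.Adj (q i) (q (i+1))) ∧
  degOn G A (q 0) = 2 ∧ degOn G A (q 1) = 2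

def QuadPartOn (G : SimpleGraph V) (A : Set V) (F : Set (Set V)) (S : Set V) : Prop :=
  ∃ q, Basic4On G A q ∧ S = {q 0, q 1} ∧
    (∃ S2 ∈ F, (SimPartOn G A S2 ∨ CycPartOn G A S2) ∧ q 2 ∈ S2) ∧
    (∃ S3 ∈ F, (SimPartOn G A S3 ∨ CycPartOn G A S3) ∧ q 3 ∈ S3)

def SQCOn (G : SimpleGraph V) (A : Set V) : Prop :=
  ∃ F : Set (Set V),
    (∀ u ∈ A, ∃! S, S ∈ F ∧ u ∈ S) ∧
    (∀ S ∈ F, SimPartOn G A S ∨ CycPartOn G A S ∨ QuadPartOn G A F S)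

/- ### infrastructure -/

lemma mem_nbhdOn {x u : V} : u ∈ nbhdOn G A x ↔ u ∈ A ∧ G.Adj x u := Iff.rfl

lemma mem_cnbOn {x u : V} : u ∈ cnbOn G A x ↔ u = x ∨ (u ∈ A ∧ G.Adj x u) := by
  simp [cnbOn, mem_nbhdOn]

lemma mem_closedNbhd {x u : V} : u ∈ closedNbhd G x ↔ u = x ∨ G.Adj x u := by
  simp [closedNbhd]

lemma nbhdOn_subset_self : nbhdOn G A x ⊆ A := fun _ h => h.1

lemma cnbOn_subset (hx : x ∈ A) : cnbOn G A x ⊆ A := by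
  intro u hu; rcases mem_cnbOn.mp hu with rfl | ⟨h, _⟩ <;> assumption

lemma nbhdOn_mono (h : B ⊆ A) (x : V) : nbhdOn G B x ⊆ nbhdOn G A x :=
  fun _ hu => ⟨h hu.1, hu.2⟩

lemma degOn_mono [Fintype V] (h : B ⊆ A) (x : V) : degOn G B x ≤ degOn G A x :=
  Set.ncard_le_ncard (nbhdOn_mono h x) (Set.toFinite _)

lemma nbhdOn_diff (W' : Set V) (x : V) : nbhdOn G (A \ W') x = nbhdOn G A x \ W' := by
  ext u; simp [mem_nbhdOn, Set.mem_diff]; tauto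

lemma cnbOn_diff {x : V} (hx : x ∉ W') : cnbOn G (A \ W') x = cnbOn G A x \ W' := by
  ext u
  simp only [mem_cnbOn, nbhdOn_diff, Set.mem_diff, mem_cnbOn]
  constructor
  · rintro (rfl | ⟨⟨h1, h2⟩, h3⟩)
    · exact ⟨Or.inl rfl, hx⟩
    · exact ⟨Or.inr ⟨h1, h3⟩, h2⟩
  · rintro ⟨rfl | ⟨h1, h3⟩, h2⟩
    · exact Or.inl rfl
    · exact Or.inr ⟨⟨h1, h2⟩, h3⟩

lemma simplicialOn_mono (h : B ⊆ A) {x : V} (hs : SimplicialOn G A x) :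
    SimplicialOn G B x :=
  fun u hu w hw hne => hs u (nbhdOn_mono h x hu) w (nbhdOn_mono h x hw) hne

lemma simplicialOn_of_subsingleton {x : V} (h : (nbhdOn G A x).Subsingleton) :
    SimplicialOn G A x :=
  fun u hu w hw hne => absurd (h hu hw) hne

lemma nbhdOn_eq_pair [Fintype V] {z a b : V} (h2 : degOn G A z ≤ 2)
    (ha : a ∈ nbhdOn G A z) (hb : b ∈ nbhdOn G A z) (hab : a ≠ b) :
    nbhdOn G A z = {a, b} := by
  refine (Set.eq_of_subset_of_ncard_le ?_ ?_ (Set.toFinite _)).symm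
  · intro u hu; rcases hu with rfl | rfl; exacts [ha, hb]
  · rw [Set.ncard_pair hab]; exact h2

lemma three_le_degOn [Fintype V] {z a b c : V} (ha : a ∈ nbhdOn G A z)
    (hb : b ∈ nbhdOn G A z) (hc : c ∈ nbhdOn G A z)
    (hab : a ≠ b) (hac : a ≠ c) (hbc : b ≠ c) : 3 ≤ degOn G A z := by
  have h3 : ({a,b,c} : Set V).ncard = 3 := Set.ncard_eq_three.mpr ⟨a,b,c,hab,hac,hbc,rfl⟩
  rw [degOn, ← h3]
  exact Set.ncard_le_ncard (by intro u hu; rcases hu with rfl|rfl|rfl <;> assumption)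
    (Set.toFinite _)

lemma zmod5_cases (i j : ZMod 5) : j = i ∨ j = i+1 ∨ j = i+2 ∨ j = i+3 ∨ j = i+4 := by
  revert i j; decide

lemma shape5 : ∀ E : Finset (ZMod 5), (∀ d ∈ E, d + 1 ∉ E) →
    E = ∅ ∨ ∃ i, E = {i} ∨ E = ({i, i+2} : Finset (ZMod 5)) := by decide

end AuxSQC

section Shed

variable {G : SimpleGraph V} {A : Set V}

lemma shed_one {v u : V} (huA : u ∈ A) (hadj : G.Adj v u)
    (hN : nbhdOn G A u ⊆ closedNbhd G v) :
    ∀ S : Set V, IsIndepOn G (A \ closedNbhd G v) S → ¬ IsMaxIndepOn G (A \ {v}) S := by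
  rintro S ⟨hSsub, hSind⟩ ⟨_, hmax⟩
  have huS : u ∉ S := fun h => (hSsub h).2 (mem_closedNbhd.mpr (Or.inr hadj))
  have hT : IsIndepOn G (A \ {v}) (insert u S) := by
    constructor
    · rintro w (rfl | hw)
      · exact ⟨huA, fun h => G.irrefl (h ▸ hadj)⟩
      · exact ⟨(hSsub hw).1, fun h => (hSsub hw).2 (h ▸ mem_closedNbhd.mpr (Or.inl rfl))⟩
    · rintro a (rfl | ha) b (rfl | hb)
      · exact fun h => G.irrefl h
      · intro h
        exact (hSsub hb).2 (hN ⟨(hSsub hb).1, h⟩)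
      · intro h
        exact (hSsub ha).2 (hN ⟨(hSsub ha).1, h.symm⟩)
      · exact hSind a ha b hb
  have := hmax _ hT (Set.subset_insert _ _)
  exact huS (this ▸ Set.mem_insert u S)

lemma shed_two {v u₁ u₂ w₁ w₂ : V} (h1A : u₁ ∈ A) (h2A : u₂ ∈ A)
    (h1 : G.Adj v u₁) (h2 : G.Adj v u₂) (hu12 : u₁ ≠ u₂)
    (hN1 : nbhdOn G A u₁ ⊆ insert w₁ (closedNbhd G v))
    (hN2 : nbhdOn G A u₂ ⊆ insert w₂ (closedNbhd G v))
    (hw : G.Adj w₁ w₂) :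
    ∀ S : Set V, IsIndepOn G (A \ closedNbhd G v) S → ¬ IsMaxIndepOn G (A \ {v}) S := by
  rintro S ⟨hSsub, hSind⟩ ⟨_, hmax⟩
  -- helper: if u is "good" (no neighbor in S) we get a contradiction
  have key : ∀ u : V, u ∈ A → G.Adj v u → (∀ s ∈ S, ¬ G.Adj u s) → False := by
    intro u huA hadj hgood
    have huS : u ∉ S := fun h => (hSsub h).2 (mem_closedNbhd.mpr (Or.inr hadj))
    have hT : IsIndepOn G (A \ {v}) (insert u S) := by
      constructor
      · rintro w (rfl | hw')
        · exact ⟨huA, fun h => G.irrefl (h ▸ hadj)⟩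
        · exact ⟨(hSsub hw').1, fun h => (hSsub hw').2 (h ▸ mem_closedNbhd.mpr (Or.inl rfl))⟩
      · rintro a (rfl | ha) b (rfl | hb)
        · exact fun h => G.irrefl h
        · exact hgood b hb
        · exact fun h => hgood a ha h.symm
        · exact hSind a ha b hb
    have := hmax _ hT (Set.subset_insert _ _)
    exact huS (this ▸ Set.mem_insert u S)
  -- if u₁ has a neighbor in S it must be w₁
  have hget : ∀ u w' : V, nbhdOn G A u ⊆ insert w' (closedNbhd G v) →
      (¬ ∀ s ∈ S, ¬ G.Adj u s) → w' ∈ S := by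
    intro u w' hN hbad
    push_neg at hbad
    obtain ⟨s, hsS, hadj⟩ := hbad
    have : s ∈ insert w' (closedNbhd G v) := hN ⟨(hSsub hsS).1, hadj⟩
    rcases this with rfl | hs
    · exact hsS
    · exact absurd hs (hSsub hsS).2
  by_cases hg1 : ∀ s ∈ S, ¬ G.Adj u₁ s
  · exact key u₁ h1A h1 hg1
  by_cases hg2 : ∀ s ∈ S, ¬ G.Adj u₂ s
  · exact key u₂ h2A h2 hg2
  exact hSind w₁ (hget u₁ w₁ hN1 hg1) w₂ (hget u₂ w₂ hN2 hg2) hw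

end Shed

section Glue

variable {G : SimpleGraph V} {A A'' : Set V}

/-- the "promise" form of a surviving basic 4-cycle part -/
def QuadPromise (G : SimpleGraph V) (A A'' : Set V) (F : Set (Set V)) (T : Set V) : Prop :=
  ∃ q, Basic4On G A'' q ∧ T = {q 0, q 1} ∧
    (∃ S2 ∈ F, (SimPartOn G A S2 ∨ CycPartOn G A S2) ∧ q 2 ∈ S2 ∧ q 2 ∈ A'') ∧
    (∃ S3 ∈ F, (SimPartOn G A S3 ∨ CycPartOn G A S3) ∧ q 3 ∈ S3 ∧ q 3 ∈ A'')

lemma glue (hsub : A'' ⊆ A) (F : Set (Set V))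
    (hcov : ∀ u ∈ A, ∃! S, S ∈ F ∧ u ∈ S)
    (hrep : ∀ S ∈ F, ∃ fam : Set (Set V),
      (∀ T ∈ fam, T ⊆ S) ∧
      (∀ u ∈ S, u ∈ A'' → ∃! T, T ∈ fam ∧ u ∈ T) ∧
      ((SimPartOn G A S ∨ CycPartOn G A S) →
        ∀ T ∈ fam, SimPartOn G A'' T ∨ CycPartOn G A'' T) ∧
      (∀ T ∈ fam, SimPartOn G A'' T ∨ CycPartOn G A'' T ∨ QuadPromise G A A'' F T)) :
    SQCOn G A'' := by
  classical
  choose fam hfsub hfcov hftyp1 hftyp2 using hrep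
  refine ⟨{T | ∃ S, ∃ hS : S ∈ F, T ∈ fam S hS}, ?_, ?_⟩
  · intro u huA''
    obtain ⟨S, ⟨hSF, huS⟩, huniq⟩ := hcov u (hsub huA'')
    obtain ⟨T, ⟨hTf, huT⟩, huniqT⟩ := hfcov S hSF u huS huA''
    refine ⟨T, ⟨⟨S, hSF, hTf⟩, huT⟩, ?_⟩
    rintro T' ⟨⟨S', hS'F, hT'f⟩, huT'⟩
    have hS'eq : S' = S := huniq S' ⟨hS'F, hfsub S' hS'F T' hT'f huT'⟩
    subst hS'eq
    exact huniqT T' ⟨hT'f, huT'⟩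
  · rintro T ⟨S, hSF, hTf⟩
    rcases hftyp2 S hSF T hTf with h | h | h
    · exact Or.inl h
    · exact Or.inr (Or.inl h)
    · refine Or.inr (Or.inr ?_)
      obtain ⟨q, hq, hTq, ⟨S2, hS2F, hS2t, hq2, hq2A⟩, ⟨S3, hS3F, hS3t, hq3, hq3A⟩⟩ := h
      refine ⟨q, hq, hTq, ?_, ?_⟩
      · obtain ⟨T2, ⟨hT2f, hq2T⟩, _⟩ := hfcov S2 hS2F _ hq2 hq2A
        exact ⟨T2, ⟨S2, hS2F, hT2f⟩, hftyp1 S2 hS2F hS2t T2 hT2f, hq2T⟩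
      · obtain ⟨T3, ⟨hT3f, hq3T⟩, _⟩ := hfcov S3 hS3F _ hq3 hq3A
        exact ⟨T3, ⟨S3, hS3F, hT3f⟩, hftyp1 S3 hS3F hS3t T3 hT3f, hq3T⟩

end Glue

lemma z50 (i : ZMod 5) {l : ZMod 5} (h : l ≠ 0) : i ≠ i + l := fun e => h (by rwa [left_eq_add] at e)
lemma z5s (i : ZMod 5) {k l : ZMod 5} (h : k ≠ l) : i + k ≠ i + l := fun e => h (by exact add_left_cancel e)
lemma z5w (i : ZMod 5) {k l m : ZMod 5} (h : k + l = m) : i + m = i + k + l := by rw [add_assoc, h]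
lemma z40 (i : ZMod 4) {l : ZMod 4} (h : l ≠ 0) : i ≠ i + l := fun e => h (by rwa [left_eq_add] at e)
lemma z4s (i : ZMod 4) {k l : ZMod 4} (h : k ≠ l) : i + k ≠ i + l := fun e => h (by exact add_left_cancel e)
lemma z4w (i : ZMod 4) {k l m : ZMod 4} (h : k + l = m) : i + m = i + k + l := by rw [add_assoc, h]

section Repairs

variable {G : SimpleGraph V} {A R : Set V}

/-- A good repair family for a simplex-or-cycle part. -/
def SimFam (G : SimpleGraph V) (A'' S : Set V) (fam : Set (Set V)) : Prop :=
  (∀ T ∈ fam, T ⊆ S) ∧ (∀ u ∈ S, u ∈ A'' → ∃! T, T ∈ fam ∧ u ∈ T) ∧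
  (∀ T ∈ fam, SimPartOn G A'' T ∨ CycPartOn G A'' T)

lemma rep_sim [Fintype V] {x : V} (hx : x ∈ A) (hs : SimplicialOn G A x) (hxR : x ∉ R) :
    SimFam G (A \ R) (cnbOn G A x) {cnbOn G (A \ R) x} := by
  refine ⟨?_, ?_, ?_⟩
  · intro T hT; rw [Set.mem_singleton_iff] at hT; subst hT
    rw [cnbOn_diff hxR]; exact Set.diff_subset
  · intro u hu huA
    refine ⟨cnbOn G (A \ R) x, ⟨rfl, ?_⟩, by rintro T ⟨rfl, _⟩; rfl⟩
    rw [cnbOn_diff hxR]; exact ⟨hu, huA.2⟩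
  · rintro T hT; rw [Set.mem_singleton_iff] at hT; subst hT
    exact Or.inl ⟨x, ⟨hx, hxR⟩, simplicialOn_mono Set.diff_subset hs, rfl⟩

lemma rep_empty {A'' S : Set V} (h : ∀ u ∈ S, u ∉ A'') : SimFam G A'' S ∅ :=
  ⟨by simp, fun u hu huA => absurd huA (h u hu), by simp⟩

lemma basic5On_mono [Fintype V] {c : ZMod 5 → V} (hB : Basic5On G A c) {B : Set V}
    (hBA : B ⊆ A) (hc : ∀ i, c i ∈ B) : Basic5On G B c := by
  obtain ⟨hA, hinj, hadj, hbasic⟩ := hB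
  refine ⟨hc, hinj, hadj, fun i ⟨h1, h2⟩ => hbasic i ⟨le_trans h1 ?_, le_trans h2 ?_⟩⟩ <;>
    exact degOn_mono hBA _

lemma rep_cyc_whole [Fintype V] {c : ZMod 5 → V} (hB : Basic5On G A c)
    (hout : ∀ j, c j ∉ R) : SimFam G (A \ R) (Set.range c) {Set.range c} := by
  refine ⟨by simp, ?_, ?_⟩
  · intro u hu huA
    exact ⟨Set.range c, ⟨rfl, hu⟩, by rintro T ⟨rfl, _⟩; rfl⟩
  · rintro T hT; rw [Set.mem_singleton_iff] at hT; subst hT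
    exact Or.inr ⟨c, basic5On_mono hB Set.diff_subset (fun i => ⟨hB.1 i, hout i⟩), rfl⟩

lemma rep_cyc_K2pair [Fintype V] {c : ZMod 5 → V} (hB : Basic5On G A c) (i : ZMod 5)
    (h1 : degOn G A (c (i+1)) ≤ 2) (h4 : degOn G A (c (i+4)) ≤ 2)
    (hin : c i ∈ R) (hout : ∀ k : ZMod 5, k ≠ i → c k ∉ R) :
    SimFam G (A \ R) (Set.range c) {{c (i+1), c (i+2)}, {c (i+4), c (i+3)}} := by
  obtain ⟨hA, hinj, hadj, _⟩ := hB
  have hne : ∀ a b : ZMod 5, a ≠ b → c a ≠ c b := fun a b h e => h (hinj e)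
  have adj' : ∀ a b : ZMod 5, b = a + 1 → G.Adj (c a) (c b) := by
    rintro a _ rfl; exact hadj a
  have n1 : nbhdOn G A (c (i+1)) = {c i, c (i+2)} :=
    nbhdOn_eq_pair h1 ⟨hA i, (adj' i (i+1) rfl).symm⟩
      ⟨hA _, adj' (i+1) (i+2) (by simpa using z5w i (by decide : (1:ZMod 5)+1 = 2))⟩
      (hne i (i+2) (z50 i (by decide)))
  have n4 : nbhdOn G A (c (i+4)) = {c (i+3), c i} :=
    nbhdOn_eq_pair h4 ⟨hA _, (adj' (i+3) (i+4) (by simpa using z5w i (by decide : (3:ZMod 5)+1 = 4))).symm⟩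
      ⟨hA i, adj' (i+4) i (by simpa using z5w i (by decide : (4:ZMod 5)+1 = 0))⟩
      (hne (i+3) i (z50 i (by decide)).symm)
  have m1 : nbhdOn G (A \ R) (c (i+1)) = {c (i+2)} := by
    rw [nbhdOn_diff, n1]
    ext u
    simp only [Set.mem_diff, Set.mem_insert_iff, Set.mem_singleton_iff]
    constructor
    · rintro ⟨rfl | rfl, hu⟩
      · exact absurd hin hu
      · rfl
    · rintro rfl; exact ⟨Or.inr rfl, hout _ (z50 i (by decide)).symm⟩
  have m4 : nbhdOn G (A \ R) (c (i+4)) = {c (i+3)} := by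
    rw [nbhdOn_diff, n4]
    ext u
    simp only [Set.mem_diff, Set.mem_insert_iff, Set.mem_singleton_iff]
    constructor
    · rintro ⟨rfl | rfl, hu⟩
      · rfl
      · exact absurd hin hu
    · rintro rfl; exact ⟨Or.inl rfl, hout _ (z50 i (by decide)).symm⟩
  refine ⟨?_, ?_, ?_⟩
  · rintro T (rfl | rfl)
    · rintro u (rfl | rfl) <;> exact Set.mem_range_self _
    · rintro u (rfl | rfl) <;> exact Set.mem_range_self _
  · rintro u ⟨j, rfl⟩ huA
    have hj : j ≠ i := fun h => huA.2 (h ▸ hin)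
    rcases zmod5_cases i j with rfl | rfl | rfl | rfl | rfl
    · exact absurd rfl hj
    · refine ⟨{c (i+1), c (i+2)}, ⟨Or.inl rfl, Or.inl rfl⟩, ?_⟩
      rintro T ⟨rfl | rfl, hm⟩
      · rfl
      · rcases hm with h | h
        · exact absurd h (hne _ _ (z5s i (by decide)))
        · exact absurd h (hne _ _ (z5s i (by decide)))
    · refine ⟨{c (i+1), c (i+2)}, ⟨Or.inl rfl, Or.inr rfl⟩, ?_⟩
      rintro T ⟨rfl | rfl, hm⟩
      · rfl
      · rcases hm with h | h
        · exact absurd h (hne _ _ (z5s i (by decide)))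
        · exact absurd h (hne _ _ (z5s i (by decide)))
    · refine ⟨{c (i+4), c (i+3)}, ⟨Or.inr rfl, Or.inr rfl⟩, ?_⟩
      rintro T ⟨rfl | rfl, hm⟩
      · rcases hm with h | h
        · exact absurd h (hne _ _ (z5s i (by decide)))
        · exact absurd h (hne _ _ (z5s i (by decide)))
      · rfl
    · refine ⟨{c (i+4), c (i+3)}, ⟨Or.inr rfl, Or.inl rfl⟩, ?_⟩
      rintro T ⟨rfl | rfl, hm⟩
      · rcases hm with h | h
        · exact absurd h (hne _ _ (z5s i (by decide)))
        · exact absurd h (hne _ _ (z5s i (by decide)))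
      · rfl
  · rintro T (rfl | rfl)
    · refine Or.inl ⟨c (i+1), ⟨hA _, hout _ (z50 i (by decide)).symm⟩, ?_, ?_⟩
      · exact simplicialOn_of_subsingleton (m1 ▸ Set.subsingleton_singleton)
      · rw [cnbOn, m1]
    · refine Or.inl ⟨c (i+4), ⟨hA _, hout _ (z50 i (by decide)).symm⟩, ?_, ?_⟩
      · exact simplicialOn_of_subsingleton (m4 ▸ Set.subsingleton_singleton)
      · rw [cnbOn, m4]

lemma rep_cyc_K1K2 [Fintype V] {c : ZMod 5 → V} (hB : Basic5On G A c) (i : ZMod 5)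
    (h1 : degOn G A (c (i+1)) ≤ 2) (h3 : degOn G A (c (i+3)) ≤ 2)
    (hin0 : c i ∈ R) (hin2 : c (i+2) ∈ R)
    (hout : ∀ k : ZMod 5, k ≠ i → k ≠ i + 2 → c k ∉ R) :
    SimFam G (A \ R) (Set.range c) {{c (i+1)}, {c (i+3), c (i+4)}} := by
  obtain ⟨hA, hinj, hadj, _⟩ := hB
  have hne : ∀ a b : ZMod 5, a ≠ b → c a ≠ c b := fun a b h e => h (hinj e)
  have adj' : ∀ a b : ZMod 5, b = a + 1 → G.Adj (c a) (c b) := by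
    rintro a _ rfl; exact hadj a
  have n1 : nbhdOn G A (c (i+1)) = {c i, c (i+2)} :=
    nbhdOn_eq_pair h1 ⟨hA i, (adj' i (i+1) rfl).symm⟩
      ⟨hA _, adj' (i+1) (i+2) (by simpa using z5w i (by decide : (1:ZMod 5)+1 = 2))⟩
      (hne i (i+2) (z50 i (by decide)))
  have n3 : nbhdOn G A (c (i+3)) = {c (i+2), c (i+4)} :=
    nbhdOn_eq_pair h3 ⟨hA _, (adj' (i+2) (i+3) (by simpa using z5w i (by decide : (2:ZMod 5)+1 = 3))).symm⟩
      ⟨hA _, adj' (i+3) (i+4) (by simpa using z5w i (by decide : (3:ZMod 5)+1 = 4))⟩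
      (hne (i+2) (i+4) (z5s i (by decide)))
  have m1 : nbhdOn G (A \ R) (c (i+1)) = ∅ := by
    rw [nbhdOn_diff, n1]
    ext u
    simp only [Set.mem_diff, Set.mem_insert_iff, Set.mem_singleton_iff, Set.mem_empty_iff_false,
      iff_false, not_and, not_not]
    rintro (rfl | rfl)
    exacts [hin0, hin2]
  have m3 : nbhdOn G (A \ R) (c (i+3)) = {c (i+4)} := by
    rw [nbhdOn_diff, n3]
    ext u
    simp only [Set.mem_diff, Set.mem_insert_iff, Set.mem_singleton_iff]
    constructor
    · rintro ⟨rfl | rfl, hu⟩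
      · exact absurd hin2 hu
      · rfl
    · rintro rfl
      exact ⟨Or.inr rfl, hout _ (z50 i (by decide)).symm (z5s i (by decide))⟩
  refine ⟨?_, ?_, ?_⟩
  · rintro T (rfl | rfl)
    · rintro u rfl; exact Set.mem_range_self _
    · rintro u (rfl | rfl) <;> exact Set.mem_range_self _
  · rintro u ⟨j, rfl⟩ huA
    have hj : j ≠ i := fun h => huA.2 (h ▸ hin0)
    have hj2 : j ≠ i + 2 := fun h => huA.2 (h ▸ hin2)
    rcases zmod5_cases i j with rfl | rfl | rfl | rfl | rfl
    · exact absurd rfl hj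
    · refine ⟨{c (i+1)}, ⟨Or.inl rfl, rfl⟩, ?_⟩
      rintro T ⟨rfl | rfl, hm⟩
      · rfl
      · rcases hm with h | h
        · exact absurd h (hne _ _ (z5s i (by decide)))
        · exact absurd h (hne _ _ (z5s i (by decide)))
    · exact absurd rfl hj2
    · refine ⟨{c (i+3), c (i+4)}, ⟨Or.inr rfl, Or.inl rfl⟩, ?_⟩
      rintro T ⟨rfl | rfl, hm⟩
      · exact absurd hm (hne _ _ (z5s i (by decide)))
      · rfl
    · refine ⟨{c (i+3), c (i+4)}, ⟨Or.inr rfl, Or.inr rfl⟩, ?_⟩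
      rintro T ⟨rfl | rfl, hm⟩
      · exact absurd hm (hne _ _ (z5s i (by decide)))
      · rfl
  · rintro T (rfl | rfl)
    · refine Or.inl ⟨c (i+1), ⟨hA _, hout _ (z50 i (by decide)).symm (z5s i (by decide))⟩, ?_, ?_⟩
      · exact simplicialOn_of_subsingleton (m1 ▸ Set.subsingleton_empty)
      · rw [cnbOn, m1]; simp
    · refine Or.inl ⟨c (i+3), ⟨hA _, hout _ (z50 i (by decide)).symm (z5s i (by decide))⟩, ?_, ?_⟩
      · exact simplicialOn_of_subsingleton (m3 ▸ Set.subsingleton_singleton)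
      · rw [cnbOn, m3]

/-- repair when exactly one vertex `c j` of the cycle survives and becomes isolated -/
lemma rep_cyc_single [Fintype V] {c : ZMod 5 → V} (hB : Basic5On G A c) (j : ZMod 5)
    (hdeg : degOn G A (c j) ≤ 2)
    (hout : c j ∉ R) (hin : ∀ k : ZMod 5, k ≠ j → c k ∈ R) :
    SimFam G (A \ R) (Set.range c) {{c j}} := by
  obtain ⟨hA, hinj, hadj, _⟩ := hB
  have hne : ∀ a b : ZMod 5, a ≠ b → c a ≠ c b := fun a b h e => h (hinj e)
  have adj' : ∀ a b : ZMod 5, b = a + 1 → G.Adj (c a) (c b) := by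
    rintro a _ rfl; exact hadj a
  have nj : nbhdOn G A (c j) = {c (j+4), c (j+1)} :=
    nbhdOn_eq_pair hdeg ⟨hA _, (adj' (j+4) j (by simpa using z5w j (by decide : (4:ZMod 5)+1 = 0))).symm⟩
      ⟨hA _, adj' j (j+1) rfl⟩ (hne (j+4) (j+1) (z5s j (by decide)))
  have mj : nbhdOn G (A \ R) (c j) = ∅ := by
    rw [nbhdOn_diff, nj]
    ext u
    simp only [Set.mem_diff, Set.mem_insert_iff, Set.mem_singleton_iff, Set.mem_empty_iff_false,
      iff_false, not_and, not_not]
    rintro (rfl | rfl)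
    · exact hin _ (z50 j (by decide)).symm
    · exact hin _ (z50 j (by decide)).symm
  refine ⟨?_, ?_, ?_⟩
  · rintro T rfl
    rintro u rfl; exact Set.mem_range_self _
  · rintro u ⟨k, rfl⟩ huA
    have hk : k = j := by
      by_contra h
      exact huA.2 (hin k h)
    subst hk
    exact ⟨{c k}, ⟨rfl, rfl⟩, by rintro T ⟨rfl, _⟩; rfl⟩
  · rintro T rfl
    refine Or.inl ⟨c j, ⟨hA _, hout⟩, ?_, ?_⟩
    · exact simplicialOn_of_subsingleton (mj ▸ Set.subsingleton_empty)
    · rw [cnbOn, mj]; simp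

/-- repair when exactly the two (adjacent) vertices `c (p+2), c (p+3)` survive -/
lemma rep_cyc_two [Fintype V] {c : ZMod 5 → V} (hB : Basic5On G A c) (p : ZMod 5)
    (hdeg : degOn G A (c (p+2)) ≤ 2 ∨ degOn G A (c (p+3)) ≤ 2)
    (hout2 : c (p+2) ∉ R) (hout3 : c (p+3) ∉ R)
    (hin : ∀ k : ZMod 5, k ≠ p + 2 → k ≠ p + 3 → c k ∈ R) :
    SimFam G (A \ R) (Set.range c) {{c (p+2), c (p+3)}} := by
  obtain ⟨hA, hinj, hadj, _⟩ := hB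
  have hne : ∀ a b : ZMod 5, a ≠ b → c a ≠ c b := fun a b h e => h (hinj e)
  have adj' : ∀ a b : ZMod 5, b = a + 1 → G.Adj (c a) (c b) := by
    rintro a _ rfl; exact hadj a
  have cov : ∀ u ∈ Set.range c, u ∈ A \ R → ∃! T, T ∈ ({({c (p+2), c (p+3)} : Set V)} : Set (Set V)) ∧ u ∈ T := by
    rintro u ⟨k, rfl⟩ huA
    have hk : k = p + 2 ∨ k = p + 3 := by
      obtain h | h | h | h | h := zmod5_cases p k <;> subst h
      · exact absurd (hin _ (z50 k (by decide)) (z50 k (by decide))) huA.2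
      · exact absurd (hin _ (z5s p (by decide)) (z5s p (by decide))) huA.2
      · exact Or.inl rfl
      · exact Or.inr rfl
      · exact absurd (hin _ (z5s p (by decide)) (z5s p (by decide))) huA.2
    refine ⟨{c (p+2), c (p+3)}, ⟨rfl, ?_⟩, by rintro T ⟨rfl, _⟩; rfl⟩
    rcases hk with rfl | rfl
    · exact Or.inl rfl
    · exact Or.inr rfl
  refine ⟨?_, cov, ?_⟩
  · rintro T rfl
    rintro u (rfl | rfl) <;> exact Set.mem_range_self _
  · rintro T rfl
    rcases hdeg with h2 | h3
    · -- centre c (p+2)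
      have n2 : nbhdOn G A (c (p+2)) = {c (p+1), c (p+3)} :=
        nbhdOn_eq_pair h2 ⟨hA _, (adj' (p+1) (p+2) (by simpa using z5w p (by decide : (1:ZMod 5)+1 = 2))).symm⟩
          ⟨hA _, adj' (p+2) (p+3) (by simpa using z5w p (by decide : (2:ZMod 5)+1 = 3))⟩
          (hne (p+1) (p+3) (z5s p (by decide)))
      have m2 : nbhdOn G (A \ R) (c (p+2)) = {c (p+3)} := by
        rw [nbhdOn_diff, n2]
        ext u
        simp only [Set.mem_diff, Set.mem_insert_iff, Set.mem_singleton_iff]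
        constructor
        · rintro ⟨rfl | rfl, hu⟩
          · exact absurd (hin _ (z5s p (by decide)) (z5s p (by decide))) hu
          · rfl
        · rintro rfl; exact ⟨Or.inr rfl, hout3⟩
      refine Or.inl ⟨c (p+2), ⟨hA _, hout2⟩, ?_, ?_⟩
      · exact simplicialOn_of_subsingleton (m2 ▸ Set.subsingleton_singleton)
      · rw [cnbOn, m2]
    · -- centre c (p+3)
      have n3 : nbhdOn G A (c (p+3)) = {c (p+2), c (p+4)} :=
        nbhdOn_eq_pair h3 ⟨hA _, (adj' (p+2) (p+3) (by simpa using z5w p (by decide : (2:ZMod 5)+1 = 3))).symm⟩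
          ⟨hA _, adj' (p+3) (p+4) (by simpa using z5w p (by decide : (3:ZMod 5)+1 = 4))⟩
          (hne (p+2) (p+4) (z5s p (by decide)))
      have m3 : nbhdOn G (A \ R) (c (p+3)) = {c (p+2)} := by
        rw [nbhdOn_diff, n3]
        ext u
        simp only [Set.mem_diff, Set.mem_insert_iff, Set.mem_singleton_iff]
        constructor
        · rintro ⟨rfl | rfl, hu⟩
          · rfl
          · exact absurd (hin _ (z5s p (by decide)) (z5s p (by decide))) hu
        · rintro rfl; exact ⟨Or.inl rfl, hout2⟩
      refine Or.inl ⟨c (p+3), ⟨hA _, hout3⟩, ?_, ?_⟩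
      · exact simplicialOn_of_subsingleton (m3 ▸ Set.subsingleton_singleton)
      · rw [cnbOn, m3, Set.pair_comm]

end Repairs

section QuadRep

variable {G : SimpleGraph V} {A R : Set V}

lemma quad_nbhd0 [Fintype V] {q : ZMod 4 → V} (hB : Basic4On G A q) :
    nbhdOn G A (q 0) = {q 1, q 3} := by
  obtain ⟨hA, hinj, hadj, hd0, _⟩ := hB
  have a03 : G.Adj (q 0) (q 3) := by
    have := hadj 3
    rw [(by decide : (3:ZMod 4) + 1 = 0)] at this
    exact this.symm
  exact nbhdOn_eq_pair (le_of_eq hd0) ⟨hA 1, hadj 0⟩ ⟨hA 3, a03⟩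
    (fun e => (by decide : (1:ZMod 4) ≠ 3) (hinj e))

lemma quad_nbhd1 [Fintype V] {q : ZMod 4 → V} (hB : Basic4On G A q) :
    nbhdOn G A (q 1) = {q 0, q 2} := by
  obtain ⟨hA, hinj, hadj, _, hd1⟩ := hB
  have a12 : G.Adj (q 1) (q 2) := by
    have := hadj 1
    rwa [(by decide : (1:ZMod 4) + 1 = 2)] at this
  exact nbhdOn_eq_pair (le_of_eq hd1) ⟨hA 0, (hadj 0).symm⟩ ⟨hA 2, a12⟩
    (fun e => (by decide : (0:ZMod 4) ≠ 2) (hinj e))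

lemma rep_quad [Fintype V] {q : ZMod 4 → V} (hB : Basic4On G A q)
    (hq0 : q 0 ∈ R → q 1 ∉ R ∧ q 2 ∈ R ∧ q 3 ∈ R)
    (hq1 : q 1 ∈ R → q 0 ∉ R ∧ q 2 ∈ R ∧ q 3 ∈ R) :
    ∃ fam : Set (Set V), (∀ T ∈ fam, T ⊆ {q 0, q 1}) ∧
      (∀ u ∈ ({q 0, q 1} : Set V), u ∈ A \ R → ∃! T, T ∈ fam ∧ u ∈ T) ∧
      (∀ T ∈ fam, SimPartOn G (A \ R) T ∨
        (Basic4On G (A \ R) q ∧ T = {q 0, q 1} ∧ (∀ i, q i ∉ R))) := by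
  have hA := hB.1
  have hinj := hB.2.1
  have n0 := quad_nbhd0 hB
  have n1 := quad_nbhd1 hB
  by_cases h0 : q 0 ∈ R
  · obtain ⟨h1n, h2r, h3r⟩ := hq0 h0
    have m1 : nbhdOn G (A \ R) (q 1) = ∅ := by
      rw [nbhdOn_diff, n1]
      ext u
      simp only [Set.mem_diff, Set.mem_insert_iff, Set.mem_singleton_iff,
        Set.mem_empty_iff_false, iff_false, not_and, not_not]
      rintro (rfl | rfl)
      exacts [h0, h2r]
    refine ⟨{{q 1}}, ?_, ?_, ?_⟩
    · rintro T rfl u rfl; exact Or.inr rfl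
    · rintro u (rfl | rfl) huA
      · exact absurd h0 huA.2
      · exact ⟨{q 1}, ⟨rfl, rfl⟩, by rintro T ⟨rfl, _⟩; rfl⟩
    · rintro T rfl
      refine Or.inl ⟨q 1, ⟨hA 1, h1n⟩, ?_, ?_⟩
      · exact simplicialOn_of_subsingleton (m1 ▸ Set.subsingleton_empty)
      · rw [cnbOn, m1]; simp
  by_cases h1 : q 1 ∈ R
  · obtain ⟨h0n, h2r, h3r⟩ := hq1 h1
    have m0 : nbhdOn G (A \ R) (q 0) = ∅ := by
      rw [nbhdOn_diff, n0]
      ext u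
      simp only [Set.mem_diff, Set.mem_insert_iff, Set.mem_singleton_iff,
        Set.mem_empty_iff_false, iff_false, not_and, not_not]
      rintro (rfl | rfl)
      exacts [h1, h3r]
    refine ⟨{{q 0}}, ?_, ?_, ?_⟩
    · rintro T rfl u rfl; exact Or.inl rfl
    · rintro u (rfl | rfl) huA
      · exact ⟨{q 0}, ⟨rfl, rfl⟩, by rintro T ⟨rfl, _⟩; rfl⟩
      · exact absurd h1 huA.2
    · rintro T rfl
      refine Or.inl ⟨q 0, ⟨hA 0, h0n⟩, ?_, ?_⟩
      · exact simplicialOn_of_subsingleton (m0 ▸ Set.subsingleton_empty)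
      · rw [cnbOn, m0]; simp
  by_cases h3 : q 3 ∈ R
  · have m0 : nbhdOn G (A \ R) (q 0) = {q 1} := by
      rw [nbhdOn_diff, n0]
      ext u
      simp only [Set.mem_diff, Set.mem_insert_iff, Set.mem_singleton_iff]
      constructor
      · rintro ⟨rfl | rfl, hu⟩
        · rfl
        · exact absurd h3 hu
      · rintro rfl; exact ⟨Or.inl rfl, h1⟩
    refine ⟨{{q 0, q 1}}, ?_, ?_, ?_⟩
    · rintro T rfl u hu; exact hu
    · rintro u hu huA
      exact ⟨{q 0, q 1}, ⟨rfl, hu⟩, by rintro T ⟨rfl, _⟩; rfl⟩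
    · rintro T rfl
      refine Or.inl ⟨q 0, ⟨hA 0, h0⟩, ?_, ?_⟩
      · exact simplicialOn_of_subsingleton (m0 ▸ Set.subsingleton_singleton)
      · rw [cnbOn, m0]
  by_cases h2 : q 2 ∈ R
  · have m1 : nbhdOn G (A \ R) (q 1) = {q 0} := by
      rw [nbhdOn_diff, n1]
      ext u
      simp only [Set.mem_diff, Set.mem_insert_iff, Set.mem_singleton_iff]
      constructor
      · rintro ⟨rfl | rfl, hu⟩
        · rfl
        · exact absurd h2 hu
      · rintro rfl; exact ⟨Or.inl rfl, h0⟩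
    refine ⟨{{q 0, q 1}}, ?_, ?_, ?_⟩
    · rintro T rfl u hu; exact hu
    · rintro u hu huA
      exact ⟨{q 0, q 1}, ⟨rfl, hu⟩, by rintro T ⟨rfl, _⟩; rfl⟩
    · rintro T rfl
      refine Or.inl ⟨q 1, ⟨hA 1, h1⟩, ?_, ?_⟩
      · exact simplicialOn_of_subsingleton (m1 ▸ Set.subsingleton_singleton)
      · rw [cnbOn, m1, Set.pair_comm]
  · -- everything survives
    have hall : ∀ i, q i ∉ R := by
      intro i
      have : i = 0 ∨ i = 1 ∨ i = 2 ∨ i = 3 := by revert i; decide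
      rcases this with rfl | rfl | rfl | rfl <;> assumption
    refine ⟨{{q 0, q 1}}, ?_, ?_, ?_⟩
    · rintro T rfl u hu; exact hu
    · rintro u hu huA
      exact ⟨{q 0, q 1}, ⟨rfl, hu⟩, by rintro T ⟨rfl, _⟩; rfl⟩
    · rintro T rfl
      refine Or.inr ⟨⟨fun i => ⟨hA i, hall i⟩, hB.2.1, hB.2.2.1, ?_, ?_⟩, rfl, hall⟩
      · rw [degOn]
        have : nbhdOn G (A \ R) (q 0) = {q 1, q 3} := by
          rw [nbhdOn_diff, n0]
          ext u
          simp only [Set.mem_diff, Set.mem_insert_iff, Set.mem_singleton_iff]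
          constructor
          · rintro ⟨h, _⟩; exact h
          · rintro (rfl | rfl)
            exacts [⟨Or.inl rfl, h1⟩, ⟨Or.inr rfl, h3⟩]
        rw [this, Set.ncard_pair (fun e => (by decide : (1:ZMod 4) ≠ 3) (hB.2.1 e))]
      · rw [degOn]
        have : nbhdOn G (A \ R) (q 1) = {q 0, q 2} := by
          rw [nbhdOn_diff, n1]
          ext u
          simp only [Set.mem_diff, Set.mem_insert_iff, Set.mem_singleton_iff]
          constructor
          · rintro ⟨h, _⟩; exact h
          · rintro (rfl | rfl)
            exacts [⟨Or.inl rfl, h0⟩, ⟨Or.inr rfl, h2⟩]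
        rw [this, Set.ncard_pair (fun e => (by decide : (0:ZMod 4) ≠ 2) (hB.2.1 e))]

end QuadRep

section CycleChoice

variable {G : SimpleGraph V} {A R : Set V} {c : ZMod 5 → V}

lemma cycle_choice [Fintype V] (hB : Basic5On G A c) :
    ∃ p : ZMod 5, degOn G A (c (p+1)) ≤ 2 ∧ degOn G A (c (p+4)) ≤ 2 ∧
      ∀ j, 3 ≤ degOn G A (c j) → (j = p ∨ j = p + 2) := by
  classical
  obtain ⟨hA, hinj, hadj, hbasic⟩ := hB
  set E := Finset.univ.filter (fun j : ZMod 5 => 3 ≤ degOn G A (c j)) with hE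
  have hmem : ∀ j, j ∈ E ↔ 3 ≤ degOn G A (c j) := by
    intro j; simp [hE]
  have hnc : ∀ d ∈ E, d + 1 ∉ E := by
    intro d hd hd1
    exact hbasic d ⟨(hmem d).mp hd, (hmem _).mp hd1⟩
  have hnotmem : ∀ j, j ∉ E → degOn G A (c j) ≤ 2 := by
    intro j h
    by_contra hcon
    exact h ((hmem j).mpr (by omega))
  rcases shape5 E hnc with h | ⟨i, h | h⟩
  · refine ⟨0, hnotmem _ (by simp [h]), hnotmem _ (by simp [h]), fun j hj => ?_⟩
    exact absurd ((hmem j).mpr hj) (by simp [h])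
  · refine ⟨i, hnotmem _ ?_, hnotmem _ ?_, fun j hj => ?_⟩
    · rw [h, Finset.mem_singleton]
      exact (z50 i (show (1:ZMod 5) ≠ 0 by decide)).symm
    · rw [h, Finset.mem_singleton]
      exact (z50 i (show (4:ZMod 5) ≠ 0 by decide)).symm
    · have := (hmem j).mpr hj
      rw [h, Finset.mem_singleton] at this; exact Or.inl this
  · refine ⟨i, hnotmem _ ?_, hnotmem _ ?_, fun j hj => ?_⟩
    · rw [h, Finset.mem_insert, Finset.mem_singleton]
      push_neg
      exact ⟨(z50 i (show (1:ZMod 5) ≠ 0 by decide)).symm, z5s i (show (1:ZMod 5) ≠ 2 by decide)⟩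
    · rw [h, Finset.mem_insert, Finset.mem_singleton]
      push_neg
      exact ⟨(z50 i (show (4:ZMod 5) ≠ 0 by decide)).symm, z5s i (show (4:ZMod 5) ≠ 2 by decide)⟩
    · have := (hmem j).mpr hj
      rw [h, Finset.mem_insert, Finset.mem_singleton] at this; exact this

/-- Repairing a basic 5-cycle part all of whose removed vertices have degree ≥ 3. -/
lemma rep_cyc_external [Fintype V] (hB : Basic5On G A c)
    (hR : ∀ j, c j ∈ R → 3 ≤ degOn G A (c j)) :
    ∃ fam, SimFam G (A \ R) (Set.range c) fam := by
  classical
  have hbasic := hB.2.2.2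
  set E := Finset.univ.filter (fun j : ZMod 5 => c j ∈ R) with hE
  have hmem : ∀ j, j ∈ E ↔ c j ∈ R := by intro j; simp [hE]
  have hnc : ∀ d ∈ E, d + 1 ∉ E := by
    intro d hd hd1
    exact hbasic d ⟨hR d ((hmem d).mp hd), hR _ ((hmem _).mp hd1)⟩
  have hle : ∀ j, c j ∈ R → ∀ k, k = j + 1 → degOn G A (c k) ≤ 2 := by
    rintro j hj _ rfl
    have h3 := hR j hj
    have hb := hbasic j
    omega
  have hle' : ∀ j, c j ∈ R → ∀ k, j = k + 1 → degOn G A (c k) ≤ 2 := by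
    rintro j hj k h
    have h3 := hR j hj
    have hb := hbasic k
    rw [← h] at hb
    omega
  rcases shape5 E hnc with h | ⟨i, h | h⟩
  · refine ⟨_, rep_cyc_whole ⟨hB.1, hB.2.1, hB.2.2.1, hbasic⟩ fun j hj => ?_⟩
    have : j ∈ E := (hmem j).mpr hj
    simp [h] at this
  · have hiR : c i ∈ R := (hmem i).mp (by simp [h])
    refine ⟨_, rep_cyc_K2pair ⟨hB.1, hB.2.1, hB.2.2.1, hbasic⟩ i
      (hle i hiR _ rfl)
      (hle' i hiR (i+4) (by simpa using z5w i (by decide : (4:ZMod 5)+1 = 0)))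
      hiR (fun k hk hkR => hk (by have := (hmem k).mpr hkR; rwa [h, Finset.mem_singleton] at this))⟩
  · have hiR : c i ∈ R := (hmem i).mp (by simp [h])
    have hi2R : c (i+2) ∈ R := (hmem (i+2)).mp (by simp [h])
    refine ⟨_, rep_cyc_K1K2 ⟨hB.1, hB.2.1, hB.2.2.1, hbasic⟩ i
      (hle i hiR _ rfl)
      (hle (i+2) hi2R (i+3) (by simpa using z5w i (by decide : (2:ZMod 5)+1 = 3)))
      hiR hi2R (fun k hk hk2 hkR => ?_)⟩
    have := (hmem k).mpr hkR
    rw [h, Finset.mem_insert, Finset.mem_singleton] at this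
    tauto

/-- Repairing the 5-cycle part containing the shed vertex `v = c p`, link case. -/
lemma rep_cyc_own_lk [Fintype V] (hB : Basic5On G A c) (p : ZMod 5)
    (hsel : ∀ j, 3 ≤ degOn G A (c j) → (j = p ∨ j = p + 2)) :
    ∃ fam, SimFam G (A \ closedNbhd G (c p)) (Set.range c) fam := by
  obtain ⟨hA, hinj, hadj, hbasic⟩ := hB
  have hB' : Basic5On G A c := ⟨hA, hinj, hadj, hbasic⟩
  have hne : ∀ a b : ZMod 5, a ≠ b → c a ≠ c b := fun a b h e => h (hinj e)
  have adj' : ∀ a b : ZMod 5, b = a + 1 → G.Adj (c a) (c b) := by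
    rintro a _ rfl; exact hadj a
  have hmemR : ∀ u, u ∈ closedNbhd G (c p) ↔ u = c p ∨ G.Adj (c p) u :=
    fun u => mem_closedNbhd
  have hpR : c p ∈ closedNbhd G (c p) := (hmemR _).mpr (Or.inl rfl)
  have hp1R : c (p+1) ∈ closedNbhd G (c p) := (hmemR _).mpr (Or.inr (adj' p (p+1) rfl))
  have hp4R : c (p+4) ∈ closedNbhd G (c p) := (hmemR _).mpr
    (Or.inr (adj' (p+4) p (by simpa using z5w p (by decide : (4:ZMod 5)+1 = 0))).symm)
  have hdeg3 : c (p+3) ∈ closedNbhd G (c p) → 3 ≤ degOn G A (c (p+3)) := by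
    intro h3
    rcases (hmemR _).mp h3 with h | h
    · exact absurd (hinj h) (z50 p (show (3:ZMod 5) ≠ 0 by decide)).symm
    · exact three_le_degOn
        ⟨hA _, (adj' (p+2) (p+3) (by simpa using z5w p (by decide : (2:ZMod 5)+1 = 3))).symm⟩
        ⟨hA _, adj' (p+3) (p+4) (by simpa using z5w p (by decide : (3:ZMod 5)+1 = 4))⟩
        ⟨hA p, h.symm⟩
        (hne _ _ (z5s p (show (2:ZMod 5) ≠ 4 by decide)))
        (hne _ _ (z50 p (show (2:ZMod 5) ≠ 0 by decide)).symm)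
        (hne _ _ (z50 p (show (4:ZMod 5) ≠ 0 by decide)).symm)
  have hdeg2 : c (p+2) ∈ closedNbhd G (c p) → 3 ≤ degOn G A (c (p+2)) := by
    intro h2
    rcases (hmemR _).mp h2 with h | h
    · exact absurd (hinj h) (z50 p (show (2:ZMod 5) ≠ 0 by decide)).symm
    · exact three_le_degOn
        ⟨hA _, (adj' (p+1) (p+2) (by simpa using z5w p (by decide : (1:ZMod 5)+1 = 2))).symm⟩
        ⟨hA _, adj' (p+2) (p+3) (by simpa using z5w p (by decide : (2:ZMod 5)+1 = 3))⟩
        ⟨hA p, h.symm⟩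
        (hne _ _ (z5s p (show (1:ZMod 5) ≠ 3 by decide)))
        (hne _ _ (z50 p (show (1:ZMod 5) ≠ 0 by decide)).symm)
        (hne _ _ (z50 p (show (3:ZMod 5) ≠ 0 by decide)).symm)
  have h3out : c (p+3) ∉ closedNbhd G (c p) := by
    intro h3
    rcases hsel (p+3) (hdeg3 h3) with h | h
    · exact (z50 p (show (3:ZMod 5) ≠ 0 by decide)).symm h
    · exact (z5s p (show (3:ZMod 5) ≠ 2 by decide)) h
  have ebasic : ¬(3 ≤ degOn G A (c (p+2)) ∧ 3 ≤ degOn G A (c (p+3))) := by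
    have hb := hbasic (p+2)
    rwa [show p+2+1 = p+3 by ring] at hb
  by_cases h2 : c (p+2) ∈ closedNbhd G (c p)
  · -- only c (p+3) survives
    have hdeg : degOn G A (c (p+3)) ≤ 2 := by
      have := hdeg2 h2
      omega
    refine ⟨_, rep_cyc_single hB' (p+3) hdeg h3out ?_⟩
    intro k hk
    obtain h | h | h | h | h := zmod5_cases p k <;> subst h
    · exact hpR
    · exact hp1R
    · exact h2
    · exact absurd rfl hk
    · exact hp4R
  · -- c (p+2) and c (p+3) survive
    have hdeg : degOn G A (c (p+2)) ≤ 2 ∨ degOn G A (c (p+3)) ≤ 2 := by omega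
    refine ⟨_, rep_cyc_two hB' p hdeg h2 h3out ?_⟩
    intro k hk2 hk3
    obtain h | h | h | h | h := zmod5_cases p k <;> subst h
    · exact hpR
    · exact hp1R
    · exact absurd rfl hk2
    · exact absurd rfl hk3
    · exact hp4R

end CycleChoice

section OtherParts

variable {G : SimpleGraph V} {A : Set V}

def GluePack (G : SimpleGraph V) (A A'' : Set V) (F : Set (Set V)) (S : Set V)
    (fam : Set (Set V)) : Prop :=
  (∀ T ∈ fam, T ⊆ S) ∧ (∀ u ∈ S, u ∈ A'' → ∃! T, T ∈ fam ∧ u ∈ T) ∧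
  ((SimPartOn G A S ∨ CycPartOn G A S) →
    ∀ T ∈ fam, SimPartOn G A'' T ∨ CycPartOn G A'' T) ∧
  (∀ T ∈ fam, SimPartOn G A'' T ∨ CycPartOn G A'' T ∨ QuadPromise G A A'' F T)

lemma glue' {A'' : Set V} (hsub : A'' ⊆ A) (F : Set (Set V))
    (hcov : ∀ u ∈ A, ∃! S, S ∈ F ∧ u ∈ S)
    (hrep : ∀ S ∈ F, ∃ fam, GluePack G A A'' F S fam) : SQCOn G A'' :=
  glue hsub F hcov hrep

lemma pack_of_simFam {A'' S : Set V} {F : Set (Set V)} {fam : Set (Set V)}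
    (h : SimFam G A'' S fam) : GluePack G A A'' F S fam :=
  ⟨h.1, h.2.1, fun _ => h.2.2, fun T hT => (h.2.2 T hT).imp id Or.inl⟩

lemma quad_pack [Fintype V] {F : Set (Set V)} {q : ZMod 4 → V} {R : Set V}
    (hq4 : Basic4On G A q)
    (hS2 : ∃ S2 ∈ F, (SimPartOn G A S2 ∨ CycPartOn G A S2) ∧ q 2 ∈ S2)
    (hS3 : ∃ S3 ∈ F, (SimPartOn G A S3 ∨ CycPartOn G A S3) ∧ q 3 ∈ S3)
    (hSC : ¬(SimPartOn G A ({q 0, q 1} : Set V) ∨ CycPartOn G A ({q 0, q 1} : Set V)))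
    (hq0 : q 0 ∈ R → q 1 ∉ R ∧ q 2 ∈ R ∧ q 3 ∈ R)
    (hq1 : q 1 ∈ R → q 0 ∉ R ∧ q 2 ∈ R ∧ q 3 ∈ R) :
    ∃ fam, GluePack G A (A \ R) F ({q 0, q 1} : Set V) fam := by
  obtain ⟨fam, hsub, hcov, htyp⟩ := rep_quad hq4 hq0 hq1
  refine ⟨fam, hsub, hcov, fun h => absurd h hSC, fun T hT => ?_⟩
  rcases htyp T hT with h | ⟨hB'', hTeq, hall⟩
  · exact Or.inl h
  · refine Or.inr (Or.inr ⟨q, hB'', hTeq, ?_, ?_⟩)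
    · obtain ⟨S2, hS2F, hS2t, hq2⟩ := hS2
      exact ⟨S2, hS2F, hS2t, hq2, ⟨hq4.1 2, hall 2⟩⟩
    · obtain ⟨S3, hS3F, hS3t, hq3⟩ := hS3
      exact ⟨S3, hS3F, hS3t, hq3, ⟨hq4.1 3, hall 3⟩⟩

/-- Repair of a part not containing `v`, deletion case `R = {v}`. -/
lemma rep_other_del [Fintype V] {F : Set (Set V)} {S : Set V} {v : V}
    (htypeS : SimPartOn G A S ∨ CycPartOn G A S ∨ QuadPartOn G A F S)
    (hvS : v ∉ S) :
    ∃ fam, GluePack G A (A \ {v}) F S fam := by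
  by_cases hSC : SimPartOn G A S ∨ CycPartOn G A S
  · rcases hSC with ⟨y, hyA, hys, rfl⟩ | ⟨cc, hb, rfl⟩
    · refine ⟨_, pack_of_simFam (rep_sim hyA hys ?_)⟩
      rintro rfl
      exact hvS (Set.mem_insert _ _)
    · refine ⟨_, pack_of_simFam (rep_cyc_whole hb fun j hj => ?_)⟩
      rw [Set.mem_singleton_iff] at hj
      exact hvS (hj ▸ Set.mem_range_self j)
  · rcases htypeS with h | h | ⟨q, hq4, rfl, hS2, hS3⟩
    · exact absurd (Or.inl h) hSC
    · exact absurd (Or.inr h) hSC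
    · refine quad_pack hq4 hS2 hS3 hSC ?_ ?_
      · rintro h
        rw [Set.mem_singleton_iff] at h
        exact absurd (h ▸ Or.inl rfl : v ∈ ({q 0, q 1} : Set V)) hvS
      · rintro h
        rw [Set.mem_singleton_iff] at h
        exact absurd (h ▸ Or.inr rfl : v ∈ ({q 0, q 1} : Set V)) hvS

/-- Repair of a part not containing `v`, link case `R = N[v]`. -/
lemma rep_other_lk [Fintype V] {F : Set (Set V)} {S : Set V} {v : V}
    (htypeS : SimPartOn G A S ∨ CycPartOn G A S ∨ QuadPartOn G A F S)
    (hvS : v ∉ S) (hvA : v ∈ A) :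
    ∃ fam, GluePack G A (A \ closedNbhd G v) F S fam := by
  by_cases hSC : SimPartOn G A S ∨ CycPartOn G A S
  · rcases hSC with ⟨y, hyA, hys, rfl⟩ | ⟨cc, hb, rfl⟩
    · refine ⟨_, pack_of_simFam (rep_sim hyA hys ?_)⟩
      intro hy
      rcases mem_closedNbhd.mp hy with rfl | hadj
      · exact hvS (Set.mem_insert _ _)
      · exact hvS (Set.mem_insert_iff.mpr (Or.inr ⟨hvA, hadj.symm⟩))
    · obtain ⟨hA', hinj, hadj, hbas⟩ := hb
      have hb' : Basic5On G A cc := ⟨hA', hinj, hadj, hbas⟩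
      have hne : ∀ a b : ZMod 5, a ≠ b → cc a ≠ cc b := fun a b h e => h (hinj e)
      have adj' : ∀ a b : ZMod 5, b = a + 1 → G.Adj (cc a) (cc b) := by
        rintro a _ rfl; exact hadj a
      have hvr : ∀ j, cc j ≠ v := by
        rintro j rfl
        exact hvS (Set.mem_range_self j)
      have hR : ∀ j, cc j ∈ closedNbhd G v → 3 ≤ degOn G A (cc j) := by
        intro j hj
        rcases mem_closedNbhd.mp hj with h | h
        · exact absurd h (hvr j)
        · exact three_le_degOn
            ⟨hA' _, (adj' (j+4) j (by simpa using z5w j (by decide : (4:ZMod 5)+1 = 0))).symm⟩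
            ⟨hA' _, adj' j (j+1) rfl⟩ ⟨hvA, h.symm⟩
            (hne _ _ (z5s j (show (4:ZMod 5) ≠ 1 by decide)))
            (hvr (j+4)) (hvr (j+1))
      obtain ⟨fam, hfam⟩ := rep_cyc_external hb' hR
      exact ⟨fam, pack_of_simFam hfam⟩
  · rcases htypeS with h | h | ⟨q, hq4, rfl, hS2, hS3⟩
    · exact absurd (Or.inl h) hSC
    · exact absurd (Or.inr h) hSC
    · have hn0 := quad_nbhd0 hq4
      have hn1 := quad_nbhd1 hq4
      have hinj := hq4.2.1
      have hadj := hq4.2.2.1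
      have a23 : G.Adj (q 2) (q 3) := by
        have := hadj 2
        rwa [(by decide : (2:ZMod 4) + 1 = 3)] at this
      have hv0 : v ≠ q 0 := by rintro rfl; exact hvS (Or.inl rfl)
      have hv1 : v ≠ q 1 := by rintro rfl; exact hvS (Or.inr rfl)
      refine quad_pack hq4 hS2 hS3 hSC ?_ ?_
      · intro h
        rcases mem_closedNbhd.mp h with h' | h'
        · exact absurd h'.symm hv0
        · have : v ∈ nbhdOn G A (q 0) := ⟨hvA, h'.symm⟩
          rw [hn0] at this
          rcases this with rfl | rfl
          · exact absurd rfl hv1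
          · -- v = q 3
            refine ⟨?_, ?_, ?_⟩
            · intro h1
              rcases mem_closedNbhd.mp h1 with h'' | h''
              · exact hv1 h''.symm
              · have : q 3 ∈ nbhdOn G A (q 1) := ⟨hq4.1 3, h''.symm⟩
                rw [hn1] at this
                rcases this with e | e
                · exact (by decide : (3:ZMod 4) ≠ 0) (hinj e)
                · exact (by decide : (3:ZMod 4) ≠ 2) (hinj e)
            · exact mem_closedNbhd.mpr (Or.inr a23.symm)
            · exact mem_closedNbhd.mpr (Or.inl rfl)
      · intro h
        rcases mem_closedNbhd.mp h with h' | h'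
        · exact absurd h'.symm hv1
        · have : v ∈ nbhdOn G A (q 1) := ⟨hvA, h'.symm⟩
          rw [hn1] at this
          rcases this with rfl | rfl
          · exact absurd rfl hv0
          · -- v = q 2
            refine ⟨?_, ?_, ?_⟩
            · intro h0
              rcases mem_closedNbhd.mp h0 with h'' | h''
              · exact hv0 h''.symm
              · have : q 2 ∈ nbhdOn G A (q 0) := ⟨hq4.1 2, h''.symm⟩
                rw [hn0] at this
                rcases this with e | e
                · exact (by decide : (2:ZMod 4) ≠ 1) (hinj e)
                · exact (by decide : (2:ZMod 4) ≠ 3) (hinj e)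
            · exact mem_closedNbhd.mpr (Or.inl rfl)
            · exact mem_closedNbhd.mpr (Or.inr a23)

end OtherParts

section Main

variable {G : SimpleGraph V}

theorem sqcOn_vdOn [Fintype V] :
    ∀ (n : ℕ) (A : Set V), A.ncard ≤ n → SQCOn G A → VDOn G A := by
  intro n
  induction n with
  | zero =>
    intro A hcard _
    have hA : A = ∅ := (Set.ncard_eq_zero (Set.toFinite A)).mp (Nat.le_zero.mp hcard)
    exact VDOn.no_edges A (by rw [hA]; simp)
  | succ n IH =>
    intro A hcard hSQC
    obtain ⟨F, hcov, htype⟩ := hSQC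
    have huniq : ∀ u ∈ A, ∀ S1 ∈ F, ∀ S2 ∈ F, u ∈ S1 → u ∈ S2 → S1 = S2 := by
      intro u huA S1 hS1 S2 hS2 hu1 hu2
      obtain ⟨S, _, hS⟩ := hcov u huA
      rw [hS S1 ⟨hS1, hu1⟩, hS S2 ⟨hS2, hu2⟩]
    by_cases hsim : ∃ S ∈ F, ∃ x ∈ A, SimplicialOn G A x ∧ S = cnbOn G A x ∧
        (nbhdOn G A x).Nonempty
    · -- Case 1: a simplex part with an edge; shed a neighbour of its centre
      obtain ⟨S0, hS0F, x, hxA, hxs, hS0eq, v, hvnb⟩ := hsim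
      obtain ⟨hvA, hxv⟩ := hvnb
      have hvnb : v ∈ nbhdOn G A x := ⟨hvA, hxv⟩
      have hvS0 : v ∈ S0 := by rw [hS0eq]; exact Set.mem_insert_iff.mpr (Or.inr hvnb)
      have hvnotS : ∀ S ∈ F, S ≠ S0 → v ∉ S := fun S hSF hne hv =>
        hne (huniq v hvA S hSF S0 hS0F hv hvS0)
      have hNsub : nbhdOn G A x ⊆ closedNbhd G v := by
        intro u hu
        by_cases huv : u = v
        · exact mem_closedNbhd.mpr (Or.inl huv)
        · exact mem_closedNbhd.mpr (Or.inr (hxs v hvnb u hu (Ne.symm huv)))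
      refine VDOn.step A v hvA ?_ ?_ (shed_one hxA hxv.symm hNsub)
      · refine IH (A \ {v}) ?_ (glue' Set.diff_subset F hcov ?_)
        · have := Set.ncard_diff_singleton_lt_of_mem hvA (Set.toFinite A)
          omega
        · intro S hSF
          by_cases hSS0 : S = S0
          · subst hSS0
            rw [hS0eq]
            refine ⟨_, pack_of_simFam (rep_sim hxA hxs ?_)⟩
            simp only [Set.mem_singleton_iff]
            exact G.ne_of_adj hxv
          · exact rep_other_del (htype S hSF) (hvnotS S hSF hSS0)
      · refine IH (A \ closedNbhd G v) ?_ (glue' Set.diff_subset F hcov ?_)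
        · have hlt : (A \ closedNbhd G v).ncard < A.ncard := by
            refine Set.ncard_lt_ncard ?_ (Set.toFinite A)
            rw [Set.ssubset_iff_of_subset Set.diff_subset]
            exact ⟨v, hvA, fun h => h.2 (mem_closedNbhd.mpr (Or.inl rfl))⟩
          omega
        · intro S hSF
          by_cases hSS0 : S = S0
          · subst hSS0
            rw [hS0eq]
            refine ⟨∅, pack_of_simFam (rep_empty ?_)⟩
            intro u hu huA''
            rcases Set.mem_insert_iff.mp hu with rfl | hu'
            · exact huA''.2 (mem_closedNbhd.mpr (Or.inr hxv.symm))
            · exact huA''.2 (hNsub hu')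
          · exact rep_other_lk (htype S hSF) (hvnotS S hSF hSS0) hvA
    by_cases hcyc : ∃ S ∈ F, CycPartOn G A S
    · -- Case 2: a basic 5-cycle part; shed a suitable vertex of it
      obtain ⟨S0, hS0F, cc, hb, hS0eq⟩ := hcyc
      obtain ⟨p, h1, h4, hsel⟩ := cycle_choice hb
      obtain ⟨hA', hinj, hadj, hbas⟩ := hb
      have hb' : Basic5On G A cc := ⟨hA', hinj, hadj, hbas⟩
      have hne : ∀ a b : ZMod 5, a ≠ b → cc a ≠ cc b := fun a b h e => h (hinj e)
      have adj' : ∀ a b : ZMod 5, b = a + 1 → G.Adj (cc a) (cc b) := by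
        rintro a _ rfl; exact hadj a
      have hvA : cc p ∈ A := hA' p
      have hvS0 : cc p ∈ S0 := by rw [hS0eq]; exact Set.mem_range_self p
      have hvnotS : ∀ S ∈ F, S ≠ S0 → cc p ∉ S := fun S hSF hne' hv =>
        hne' (huniq (cc p) hvA S hSF S0 hS0F hv hvS0)
      have n1 : nbhdOn G A (cc (p+1)) = {cc p, cc (p+2)} :=
        nbhdOn_eq_pair h1 ⟨hA' p, (adj' p (p+1) rfl).symm⟩
          ⟨hA' _, adj' (p+1) (p+2) (by simpa using z5w p (by decide : (1:ZMod 5)+1 = 2))⟩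
          (hne p (p+2) (z50 p (show (2:ZMod 5) ≠ 0 by decide)))
      have n4 : nbhdOn G A (cc (p+4)) = {cc (p+3), cc p} :=
        nbhdOn_eq_pair h4
          ⟨hA' _, (adj' (p+3) (p+4) (by simpa using z5w p (by decide : (3:ZMod 5)+1 = 4))).symm⟩
          ⟨hA' p, adj' (p+4) p (by simpa using z5w p (by decide : (4:ZMod 5)+1 = 0))⟩
          (hne (p+3) p (z50 p (show (3:ZMod 5) ≠ 0 by decide)).symm)
      refine VDOn.step A (cc p) hvA ?_ ?_
        (shed_two (hA' (p+1)) (hA' (p+4)) (adj' p (p+1) rfl)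
          (adj' (p+4) p (by simpa using z5w p (by decide : (4:ZMod 5)+1 = 0))).symm
          (hne (p+1) (p+4) (z5s p (show (1:ZMod 5) ≠ 4 by decide)))
          ?_ ?_ (adj' (p+2) (p+3) (by simpa using z5w p (by decide : (2:ZMod 5)+1 = 3))))
      · refine IH (A \ {cc p}) ?_ (glue' Set.diff_subset F hcov ?_)
        · have := Set.ncard_diff_singleton_lt_of_mem hvA (Set.toFinite A)
          omega
        · intro S hSF
          by_cases hSS0 : S = S0
          · subst hSS0
            rw [hS0eq]
            refine ⟨_, pack_of_simFam (rep_cyc_K2pair hb' p h1 h4 rfl ?_)⟩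
            intro k hk hkmem
            rw [Set.mem_singleton_iff] at hkmem
            exact hk (hinj hkmem)
          · exact rep_other_del (htype S hSF) (hvnotS S hSF hSS0)
      · refine IH (A \ closedNbhd G (cc p)) ?_ (glue' Set.diff_subset F hcov ?_)
        · have hlt : (A \ closedNbhd G (cc p)).ncard < A.ncard := by
            refine Set.ncard_lt_ncard ?_ (Set.toFinite A)
            rw [Set.ssubset_iff_of_subset Set.diff_subset]
            exact ⟨cc p, hvA, fun h => h.2 (mem_closedNbhd.mpr (Or.inl rfl))⟩
          omega
        · intro S hSF
          by_cases hSS0 : S = S0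
          · subst hSS0
            rw [hS0eq]
            obtain ⟨fam, hfam⟩ := rep_cyc_own_lk hb' p hsel
            exact ⟨fam, pack_of_simFam hfam⟩
          · exact rep_other_lk (htype S hSF) (hvnotS S hSF hSS0) hvA
      · rw [n1]
        rintro u (rfl | rfl)
        · exact Set.mem_insert_iff.mpr (Or.inr (mem_closedNbhd.mpr (Or.inl rfl)))
        · exact Set.mem_insert_iff.mpr (Or.inl rfl)
      · rw [n4]
        rintro u (rfl | rfl)
        · exact Set.mem_insert_iff.mpr (Or.inl rfl)
        · exact Set.mem_insert_iff.mpr (Or.inr (mem_closedNbhd.mpr (Or.inl rfl)))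
    · -- Case 3: no edges at all
      refine VDOn.no_edges A ?_
      intro u huA w hwA hadj
      have hSimEmpty : ∀ S' ∈ F, ∀ y ∈ A, SimplicialOn G A y → S' = cnbOn G A y →
          nbhdOn G A y = ∅ := by
        intro S' hS'F y hyA hys hS'eq
        by_contra hne
        exact hsim ⟨S', hS'F, y, hyA, hys, hS'eq, Set.nonempty_iff_ne_empty.mpr hne⟩
      obtain ⟨S, ⟨hSF, huS⟩, _⟩ := hcov u huA
      rcases htype S hSF with ⟨y, hyA, hys, hSeq⟩ | hC | ⟨q, hq, hSeq, ⟨S2, hS2F, hS2t, hq2⟩, _⟩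
      · have hy0 := hSimEmpty S hSF y hyA hys hSeq
        have huy : u = y := by
          rw [hSeq] at huS
          rcases Set.mem_insert_iff.mp huS with rfl | h
          · rfl
          · rw [hy0] at h; exact absurd h (Set.notMem_empty u)
        have : w ∈ nbhdOn G A y := ⟨hwA, huy ▸ hadj⟩
        rw [hy0] at this
        exact this
      · exact hcyc ⟨S, hSF, hC⟩
      · rcases hS2t with ⟨y, hyA, hys, hS2eq⟩ | hC
        · have hy0 := hSimEmpty S2 hS2F y hyA hys hS2eq
          have hq2y : q 2 = y := by
            rw [hS2eq] at hq2
            rcases Set.mem_insert_iff.mp hq2 with h | h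
            · exact h
            · rw [hy0] at h; exact absurd h (Set.notMem_empty _)
          have a12 : G.Adj (q 1) (q 2) := by
            have := hq.2.2.1 1
            rwa [(by decide : (1:ZMod 4) + 1 = 2)] at this
          have : q 1 ∈ nbhdOn G A y := ⟨hq.1 1, hq2y ▸ a12.symm⟩
          rw [hy0] at this
          exact this
        · exact hcyc ⟨S2, hS2F, hC⟩

theorem sqcOn_vd [Fintype V] {A : Set V} (h : SQCOn G A) : VDOn G A :=
  sqcOn_vdOn A.ncard A le_rfl h

end Main

section Bridge

variable {G : SimpleGraph V}

lemma nbhdOn_univ (z : V) : nbhdOn G Set.univ z = nbhd G z := by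
  ext u; simp [nbhd, nbhdOn]

lemma degOn_univ (z : V) : degOn G Set.univ z = deg G z := by
  rw [degOn, deg, nbhdOn_univ]

lemma cnbOn_univ (z : V) : cnbOn G Set.univ z = closedNbhd G z := by
  rw [cnbOn, closedNbhd, nbhdOn_univ]; rfl

lemma mem_nbhd {z u : V} : u ∈ nbhd G z ↔ G.Adj z u := Iff.rfl

lemma nbhd_pair [Fintype V] {z u w : V} (h2 : deg G z = 2) (hu : G.Adj z u)
    (hw : G.Adj z w) (huw : u ≠ w) : nbhd G z = {u, w} := by
  rw [← nbhdOn_univ]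
  exact nbhdOn_eq_pair (by rw [degOn_univ, h2]) ⟨trivial, hu⟩ ⟨trivial, hw⟩ huw

lemma basic5_bridge [Fintype V] {c : ZMod 5 → V} (h : IsBasic5Cycle G c) :
    Basic5On G Set.univ c := by
  obtain ⟨⟨hinj, hadj⟩, hb⟩ := h
  refine ⟨fun _ => trivial, hinj, hadj, fun i => ?_⟩
  rw [degOn_univ, degOn_univ]
  exact hb i

lemma simplicial_bridge {x : V} (h : IsSimplicial G x) : SimplicialOn G Set.univ x :=
  fun u hu w hw hne => h u w hu.2 hw.2 hne

end Bridge

section Pattern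

variable {G : SimpleGraph V}

lemma pattern_refute {a b cc d : V}
    (Na : nbhd G a = {b, d}) (Nb : nbhd G b = {a, cc}) (Nd : nbhd G d = {cc, a})
    (hab : a ≠ b) (hac : a ≠ cc) (had : a ≠ d) (hbc : b ≠ cc) (hbd : b ≠ d)
    (hcd : cc ≠ d) :
    ¬ InSimplex G a ∧ ¬ OnBasic5Cycle G a := by
  have memNa : ∀ u, G.Adj a u ↔ (u = b ∨ u = d) := by
    intro u
    rw [← mem_nbhd, Na]; simp
  have memNb : ∀ u, G.Adj b u ↔ (u = a ∨ u = cc) := by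
    intro u
    rw [← mem_nbhd, Nb]; simp
  have memNd : ∀ u, G.Adj d u ↔ (u = cc ∨ u = a) := by
    intro u
    rw [← mem_nbhd, Nd]; simp
  have aab : G.Adj a b := (memNa b).mpr (Or.inl rfl)
  have aad : G.Adj a d := (memNa d).mpr (Or.inr rfl)
  have aba : G.Adj b a := (memNb a).mpr (Or.inl rfl)
  have abc : G.Adj b cc := (memNb cc).mpr (Or.inr rfl)
  have adc : G.Adj d cc := (memNd cc).mpr (Or.inl rfl)
  have ada : G.Adj d a := (memNd a).mpr (Or.inr rfl)
  have nbd : ¬ G.Adj b d := by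
    intro h
    rcases (memNb d).mp h with e | e
    · exact had e.symm
    · exact hcd e.symm
  have nac : ¬ G.Adj a cc := by
    intro h
    rcases (memNa cc).mp h with e | e
    · exact hbc e.symm
    · exact hcd e
  constructor
  · rintro ⟨y, hy, hay⟩
    rcases mem_closedNbhd.mp hay with rfl | hya
    · exact nbd (hy b d aab aad hbd)
    · have : y ∈ nbhd G a := hya.symm
      rw [Na] at this
      rcases this with rfl | rfl
      · exact nac (hy a cc aba abc hac)
      · exact nac (hy cc a adc ada (fun e => hac e.symm)).symm
  · rintro ⟨Y, ⟨⟨hinjY, hadjY⟩, _⟩, i, hYi⟩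
    have Yne : ∀ j l : ZMod 5, j ≠ l → Y j ≠ Y l := fun j l h e => h (hinjY e)
    have adjY' : ∀ j l : ZMod 5, l = j + 1 → G.Adj (Y j) (Y l) := by
      rintro j _ rfl; exact hadjY j
    have h1 : Y (i+1) = b ∨ Y (i+1) = d := (memNa _).mp (hYi ▸ hadjY i)
    have h4 : Y (i+4) = b ∨ Y (i+4) = d := by
      have := (adjY' (i+4) i (by simpa using z5w i (by decide : (4:ZMod 5)+1 = 0))).symm
      exact (memNa _).mp (hYi ▸ this)
    have a12' : G.Adj (Y (i+1)) (Y (i+2)) :=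
      adjY' (i+1) (i+2) (by simpa using z5w i (by decide : (1:ZMod 5)+1 = 2))
    have a34' : G.Adj (Y (i+3)) (Y (i+4)) :=
      adjY' (i+3) (i+4) (by simpa using z5w i (by decide : (3:ZMod 5)+1 = 4))
    rcases h1 with e1 | e1
    · have h2 : Y (i+2) = a ∨ Y (i+2) = cc := (memNb _).mp (e1 ▸ a12')
      have h2cc : Y (i+2) = cc := by
        rcases h2 with e | e
        · exact absurd (e.trans hYi.symm) (Yne _ _ (z50 i (show (2:ZMod 5) ≠ 0 by decide)).symm)
        · exact e
      have h4d : Y (i+4) = d := by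
        rcases h4 with e | e
        · exact absurd (e.trans e1.symm) (Yne _ _ (z5s i (show (4:ZMod 5) ≠ 1 by decide)))
        · exact e
      have h3 : Y (i+3) = cc ∨ Y (i+3) = a := (memNd _).mp (h4d ▸ a34').symm
      rcases h3 with e | e
      · exact absurd (e.trans h2cc.symm) (Yne _ _ (z5s i (show (3:ZMod 5) ≠ 2 by decide)))
      · exact absurd (e.trans hYi.symm) (Yne _ _ (z50 i (show (3:ZMod 5) ≠ 0 by decide)).symm)
    · have h2 : Y (i+2) = cc ∨ Y (i+2) = a := (memNd _).mp (e1 ▸ a12')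
      have h2cc : Y (i+2) = cc := by
        rcases h2 with e | e
        · exact e
        · exact absurd (e.trans hYi.symm) (Yne _ _ (z50 i (show (2:ZMod 5) ≠ 0 by decide)).symm)
      have h4b : Y (i+4) = b := by
        rcases h4 with e | e
        · exact e
        · exact absurd (e.trans e1.symm) (Yne _ _ (z5s i (show (4:ZMod 5) ≠ 1 by decide)))
      have h3 : Y (i+3) = a ∨ Y (i+3) = cc := (memNb _).mp (h4b ▸ a34').symm
      rcases h3 with e | e
      · exact absurd (e.trans hYi.symm) (Yne _ _ (z50 i (show (3:ZMod 5) ≠ 0 by decide)).symm)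
      · exact absurd (e.trans h2cc.symm) (Yne _ _ (z5s i (show (3:ZMod 5) ≠ 2 by decide)))

end Pattern

section Exclude

variable {G : SimpleGraph V}

lemma bpair_exclude [Fintype V] {t : ℕ} (q : Fin t → ZMod 4 → V)
    (hq : ∀ k, IsBasic4Cycle G (q k))
    (hBcov : ∀ (k k' : Fin t) (v : V), (v = q k 0 ∨ v = q k 1) →
      (v = q k' 0 ∨ v = q k' 1) → k = k')
    (k k' : Fin t) (h : q k 2 = q k' 0 ∨ q k 2 = q k' 1) : False := by
  obtain ⟨⟨hinjk, hadjk⟩, hd0, hd1, hIS2, hIS3⟩ := hq k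
  obtain ⟨⟨hinj', hadj'⟩, hd0', hd1', hIS2', hIS3'⟩ := hq k'
  have qne : ∀ a b : ZMod 4, a ≠ b → q k a ≠ q k b := fun a b hne e => hne (hinjk e)
  have qne' : ∀ a b : ZMod 4, a ≠ b → q k' a ≠ q k' b := fun a b hne e => hne (hinj' e)
  have a01 : G.Adj (q k 0) (q k 1) := hadjk 0
  have a12 : G.Adj (q k 1) (q k 2) := by
    have := hadjk 1; rwa [(by decide : (1:ZMod 4)+1 = 2)] at this
  have a23 : G.Adj (q k 2) (q k 3) := by
    have := hadjk 2; rwa [(by decide : (2:ZMod 4)+1 = 3)] at this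
  have a30 : G.Adj (q k 3) (q k 0) := by
    have := hadjk 3; rwa [(by decide : (3:ZMod 4)+1 = 0)] at this
  have a01' : G.Adj (q k' 0) (q k' 1) := hadj' 0
  have a12' : G.Adj (q k' 1) (q k' 2) := by
    have := hadj' 1; rwa [(by decide : (1:ZMod 4)+1 = 2)] at this
  have a30' : G.Adj (q k' 3) (q k' 0) := by
    have := hadj' 3; rwa [(by decide : (3:ZMod 4)+1 = 0)] at this
  have Na : nbhd G (q k 0) = {q k 1, q k 3} :=
    nbhd_pair hd0 a01 a30.symm (qne 1 3 (by decide))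
  have Nb : nbhd G (q k 1) = {q k 0, q k 2} :=
    nbhd_pair hd1 a01.symm a12 (qne 0 2 (by decide))
  rcases h with h | h
  · -- q k 2 = q k' 0
    have hdcc : deg G (q k 2) = 2 := by rw [h]; exact hd0'
    have Ncc : nbhd G (q k 2) = {q k 1, q k 3} :=
      nbhd_pair hdcc a12.symm a23 (qne 1 3 (by decide))
    have m1 : q k' 1 ∈ nbhd G (q k 2) := show G.Adj (q k 2) (q k' 1) by rw [h]; exact a01'
    have m3 : q k' 3 ∈ nbhd G (q k 2) := show G.Adj (q k 2) (q k' 3) by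
      rw [h]; exact a30'.symm
    rw [Ncc] at m1 m3
    rcases m1 with e1 | e1
    · -- q k' 1 = q k 1 : double cover of q k 1
      have := hBcov k' k (q k' 1) (Or.inr rfl) (Or.inr e1)
      subst this
      exact qne 2 0 (by decide) h
    · -- q k' 1 = q k 3
      have e3 : q k' 3 = q k 1 := by
        rcases m3 with e | e
        · exact e
        · exact absurd (e.trans e1.symm) (qne' 3 1 (by decide))
      have hdd : deg G (q k 3) = 2 := by rw [← e1]; exact hd1'
      have Nd : nbhd G (q k 3) = {q k 2, q k 0} :=
        nbhd_pair hdd a23.symm a30 (qne 2 0 (by decide))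
      have m2 : q k' 2 ∈ nbhd G (q k 3) := show G.Adj (q k 3) (q k' 2) by
        rw [← e1]; exact a12'
      rw [Nd] at m2
      have e2 : q k' 2 = q k 0 := by
        rcases m2 with e | e
        · exact absurd (e.trans h) (qne' 2 0 (by decide))
        · exact e
      have hpat := pattern_refute Na Nb Nd
        (qne 0 1 (by decide)) (qne 0 2 (by decide)) (qne 0 3 (by decide))
        (qne 1 2 (by decide)) (qne 1 3 (by decide)) (qne 2 3 (by decide))
      rw [e2] at hIS2'
      rcases hIS2' with hI | hI
      · exact hpat.1 hI
      · exact hpat.2 hI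
  · -- q k 2 = q k' 1
    have hdcc : deg G (q k 2) = 2 := by rw [h]; exact hd1'
    have Ncc : nbhd G (q k 2) = {q k 1, q k 3} :=
      nbhd_pair hdcc a12.symm a23 (qne 1 3 (by decide))
    have m0 : q k' 0 ∈ nbhd G (q k 2) := show G.Adj (q k 2) (q k' 0) by
      rw [h]; exact a01'.symm
    have m2 : q k' 2 ∈ nbhd G (q k 2) := show G.Adj (q k 2) (q k' 2) by
      rw [h]; exact a12'
    rw [Ncc] at m0 m2
    rcases m0 with e0 | e0
    · have := hBcov k' k (q k' 0) (Or.inl rfl) (Or.inr e0)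
      subst this
      exact qne 2 1 (by decide) h
    · -- q k' 0 = q k 3
      have e2 : q k' 2 = q k 1 := by
        rcases m2 with e | e
        · exact e
        · exact absurd (e.trans e0.symm) (qne' 2 0 (by decide))
      have hdd : deg G (q k 3) = 2 := by rw [← e0]; exact hd0'
      have Nd : nbhd G (q k 3) = {q k 2, q k 0} :=
        nbhd_pair hdd a23.symm a30 (qne 2 0 (by decide))
      have m3 : q k' 3 ∈ nbhd G (q k 3) := show G.Adj (q k 3) (q k' 3) by
        rw [← e0]; exact a30'.symm
      rw [Nd] at m3
      have e3 : q k' 3 = q k 0 := by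
        rcases m3 with e | e
        · exact absurd (e.trans h) (qne' 3 1 (by decide))
        · exact e
      have hpat := pattern_refute Na Nb Nd
        (qne 0 1 (by decide)) (qne 0 2 (by decide)) (qne 0 3 (by decide))
        (qne 1 2 (by decide)) (qne 1 3 (by decide)) (qne 2 3 (by decide))
      rw [e3] at hIS3'
      rcases hIS3' with hI | hI
      · exact hpat.1 hI
      · exact hpat.2 hI

end Exclude

theorem stmt0' [Fintype V] (G : SimpleGraph V) (h : InSQC G) :
    VertexDecomposable G := by
  classical
  obtain ⟨m, s, t, x, c, q, hx, hc, hq, hpart⟩ := h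
  -- the sets of the partition
  set pt : (Fin m ⊕ Fin s ⊕ Fin t) → Set V := fun p =>
    match p with
    | Sum.inl i => closedNbhd G (x i)
    | Sum.inr (Sum.inl j) => Set.range (c j)
    | Sum.inr (Sum.inr k) => {q k 0, q k 1} with hpt
  have hmempt : ∀ (v : V) (p : Fin m ⊕ Fin s ⊕ Fin t),
      v ∈ pt p ↔ (match p with
        | Sum.inl i => v ∈ closedNbhd G (x i)
        | Sum.inr (Sum.inl j) => v ∈ Set.range (c j)
        | Sum.inr (Sum.inr k) => v = q k 0 ∨ v = q k 1) := by
    rintro v (i | j | k)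
    · rfl
    · rfl
    · simp [hpt]
  have hBcov : ∀ (k k' : Fin t) (v : V), (v = q k 0 ∨ v = q k 1) →
      (v = q k' 0 ∨ v = q k' 1) → k = k' := by
    intro k k' v h1 h2
    obtain ⟨p, _, hup⟩ := hpart v
    have e1 := hup (Sum.inr (Sum.inr k)) h1
    have e2 := hup (Sum.inr (Sum.inr k')) h2
    rw [← e2] at e1
    simpa using e1
  have hSQC : SQCOn G Set.univ := by
    refine ⟨Set.range pt, ?_, ?_⟩
    · intro u _
      obtain ⟨p, hp, hup⟩ := hpart u
      refine ⟨pt p, ⟨Set.mem_range_self p, (hmempt u p).mpr hp⟩, ?_⟩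
      rintro T ⟨⟨p', rfl⟩, huT⟩
      rw [hup p' ((hmempt u p').mp huT)]
    · rintro S ⟨p, rfl⟩
      match p with
      | Sum.inl i =>
        exact Or.inl ⟨x i, trivial, simplicial_bridge (hx i), (cnbOn_univ (x i)).symm⟩
      | Sum.inr (Sum.inl j) =>
        exact Or.inr (Or.inl ⟨c j, basic5_bridge (hc j), rfl⟩)
      | Sum.inr (Sum.inr k) =>
        refine Or.inr (Or.inr ⟨q k, ?_, rfl, ?_, ?_⟩)
        · obtain ⟨⟨hinj, hadj⟩, hd0, hd1, _, _⟩ := hq k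
          exact ⟨fun _ => trivial, hinj, hadj, by rw [degOn_univ]; exact hd0,
            by rw [degOn_univ]; exact hd1⟩
        · -- pointer for q k 2
          obtain ⟨p2, hp2, _⟩ := hpart (q k 2)
          match p2, hp2 with
          | Sum.inl i, hp2 =>
            exact ⟨pt (Sum.inl i), ⟨Sum.inl i, rfl⟩,
              Or.inl ⟨x i, trivial, simplicial_bridge (hx i), (cnbOn_univ (x i)).symm⟩, hp2⟩
          | Sum.inr (Sum.inl j), hp2 =>
            exact ⟨pt (Sum.inr (Sum.inl j)), ⟨Sum.inr (Sum.inl j), rfl⟩,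
              Or.inr ⟨c j, basic5_bridge (hc j), rfl⟩, hp2⟩
          | Sum.inr (Sum.inr k'), hp2 =>
            exact absurd hp2 (fun hh => bpair_exclude q hq hBcov k k' hh)
        · -- pointer for q k 3: use the reversed labelling of the 4-cycles
          obtain ⟨p3, hp3, _⟩ := hpart (q k 3)
          match p3, hp3 with
          | Sum.inl i, hp3 =>
            exact ⟨pt (Sum.inl i), ⟨Sum.inl i, rfl⟩,
              Or.inl ⟨x i, trivial, simplicial_bridge (hx i), (cnbOn_univ (x i)).symm⟩, hp3⟩
          | Sum.inr (Sum.inl j), hp3 =>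
            exact ⟨pt (Sum.inr (Sum.inl j)), ⟨Sum.inr (Sum.inl j), rfl⟩,
              Or.inr ⟨c j, basic5_bridge (hc j), rfl⟩, hp3⟩
          | Sum.inr (Sum.inr k'), hp3 =>
            -- reversed 4-cycles
            refine absurd hp3 (fun hh => ?_)
            set r : Fin t → ZMod 4 → V := fun k i => q k (1 - i) with hr
            have hqr : ∀ k, IsBasic4Cycle G (r k) := by
              intro k0
              obtain ⟨⟨hinj, hadj⟩, hd0, hd1, hi2, hi3⟩ := hq k0
              refine ⟨⟨?_, ?_⟩, ?_, ?_, ?_, ?_⟩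
              · intro a b e
                have h2 : (1 : ZMod 4) - a = 1 - b := hinj e
                have h3 := congrArg (fun z : ZMod 4 => 1 - z) h2
                simpa using h3
              · intro i
                have := (hadj (1 - i - 1)).symm
                have e : (1 - i - 1 : ZMod 4) + 1 = 1 - i := by ring
                rw [e] at this
                have e2 : (1 - (i+1) : ZMod 4) = 1 - i - 1 := by ring
                show G.Adj (q k0 (1 - i)) (q k0 (1 - (i+1)))
                rw [e2]
                exact this
              · show deg G (q k0 (1 - 0)) = 2
                rw [(by decide : (1:ZMod 4) - 0 = 1)]; exact hd1
              · show deg G (q k0 (1 - 1)) = 2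
                rw [(by decide : (1:ZMod 4) - 1 = 0)]; exact hd0
              · show InSimplex G (q k0 (1 - 2)) ∨ OnBasic5Cycle G (q k0 (1 - 2))
                rw [(by decide : (1:ZMod 4) - 2 = 3)]; exact hi3
              · show InSimplex G (q k0 (1 - 3)) ∨ OnBasic5Cycle G (q k0 (1 - 3))
                rw [(by decide : (1:ZMod 4) - 3 = 2)]; exact hi2
            have hBcovr : ∀ (k k' : Fin t) (v : V), (v = r k 0 ∨ v = r k 1) →
                (v = r k' 0 ∨ v = r k' 1) → k = k' := by
              intro k1 k2 v h1 h2
              refine hBcov k1 k2 v ?_ ?_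
              · rcases h1 with e | e
                · simp only [hr] at e; rw [(by decide : (1:ZMod 4) - 0 = 1)] at e; exact Or.inr e
                · simp only [hr] at e; rw [(by decide : (1:ZMod 4) - 1 = 0)] at e; exact Or.inl e
              · rcases h2 with e | e
                · simp only [hr] at e; rw [(by decide : (1:ZMod 4) - 0 = 1)] at e; exact Or.inr e
                · simp only [hr] at e; rw [(by decide : (1:ZMod 4) - 1 = 0)] at e; exact Or.inl e
            refine bpair_exclude r hqr hBcovr k k' ?_
            have er2 : r k 2 = q k 3 := by
              simp only [hr]
              rw [(by decide : (1:ZMod 4) - 2 = 3)]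
            have er0 : r k' 0 = q k' 1 := by
              simp only [hr]
              rw [(by decide : (1:ZMod 4) - 0 = 1)]
            have er1 : r k' 1 = q k' 0 := by
              simp only [hr]
              rw [(by decide : (1:ZMod 4) - 1 = 0)]
            rcases hh with e | e
            · exact Or.inr (by rw [er2, er1]; exact e)
            · exact Or.inl (by rw [er2, er0]; exact e)
  exact sqcOn_vd hSQC


/-- Every finite simple graph belonging to the class `SQC` is
vertex decomposable. -/
theorem stmt0 {V : Type*} [Fintype V] (G : SimpleGraph V) (h : InSQC G) :
    VertexDecomposable G := stmt0' G h
end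

section
/- If a finite simple graph G belongs to the class SQC, with a partition of V(G) into the closed neighborhoods of m simplicial vertices, the vertex sets of s basic 5-cycles, and the sets B(Q) of t basic 4-cycles, then G is well-covered and its independence number satisfies α(G) = m + 2s + t. -/
open SimpleGraph

variable {V : Type*} {W : Type*}

section SQCHelpers

variable {V : Type*} [Fintype V] {G : SimpleGraph V}

private lemma dom_of_max {S : Set V} (hS : IsMaxIndepOn G Set.univ S) {v : V} (hv : v ∉ S) :
    ∃ u ∈ S, G.Adj v u := by
  by_contra h
  push_neg at h
  have hT : IsIndepOn G Set.univ (insert v S) := by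
    refine ⟨Set.subset_univ _, ?_⟩
    intro a ha b hb hadj
    rcases Set.mem_insert_iff.1 ha with ha' | ha' <;>
      rcases Set.mem_insert_iff.1 hb with hb' | hb'
    · exact G.loopless.irrefl v (by rw [ha', hb'] at hadj; exact hadj)
    · exact h b hb' (by rwa [ha'] at hadj)
    · exact h a ha' (by rw [hb'] at hadj; exact hadj.symm)
    · exact hS.1.2 a ha' b hb' hadj
  have heq := hS.2 _ hT (Set.subset_insert _ _)
  exact hv (by rw [heq]; exact Set.mem_insert v S)

private lemma cyc_adj_pred {n : ℕ} {c : ZMod n → V} (hc : IsCycleMap G c) (i : ZMod n) :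
    G.Adj (c i) (c (i - 1)) := by
  have h := (hc.2 (i - 1)).symm
  rwa [sub_add_cancel] at h

private lemma cyc_pair_subset {n : ℕ} {c : ZMod n → V} (hc : IsCycleMap G c) (i : ZMod n) :
    ({c (i - 1), c (i + 1)} : Set V) ⊆ nbhd G (c i) := by
  intro u hu
  rcases Set.mem_insert_iff.1 hu with rfl | hu
  · exact cyc_adj_pred hc i
  · rw [Set.mem_singleton_iff] at hu
    subst hu
    exact hc.2 i

private lemma cyc_two_le_deg {n : ℕ} {c : ZMod n → V} (hc : IsCycleMap G c) (i : ZMod n)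
    (hne : i - 1 ≠ i + 1) : 2 ≤ deg G (c i) := by
  have h := Set.ncard_le_ncard (cyc_pair_subset hc i) (Set.toFinite _)
  rwa [Set.ncard_pair (fun h' => hne (hc.1 h'))] at h

private lemma cyc_nbhd_eq {n : ℕ} {c : ZMod n → V} (hc : IsCycleMap G c) (i : ZMod n)
    (hne : i - 1 ≠ i + 1) (hdeg : deg G (c i) = 2) :
    nbhd G (c i) = {c (i - 1), c (i + 1)} := by
  have hpair : ({c (i - 1), c (i + 1)} : Set V).ncard = 2 :=
    Set.ncard_pair (fun h' => hne (hc.1 h'))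
  refine (Set.eq_of_subset_of_ncard_le (cyc_pair_subset hc i) ?_ (Set.toFinite _)).symm
  rw [hpair]
  exact le_of_eq hdeg

private lemma simplicial_adj {v : V} (hv : IsSimplicial G v) {a b : V}
    (ha : a ∈ closedNbhd G v) (hb : b ∈ closedNbhd G v) (hab : a ≠ b) : G.Adj a b := by
  rcases Set.mem_insert_iff.1 ha with rfl | ha
  · rcases Set.mem_insert_iff.1 hb with rfl | hb
    · exact absurd rfl hab
    · exact hb
  · rcases Set.mem_insert_iff.1 hb with rfl | hb
    · exact ha.symm
    · exact hv a b ha hb hab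

private lemma simplex_count {S : Set V} (hS : IsMaxIndepOn G Set.univ S)
    {v : V} (hv : IsSimplicial G v) : (S ∩ closedNbhd G v).ncard = 1 := by
  have hne : (S ∩ closedNbhd G v).Nonempty := by
    by_cases h : v ∈ S
    · exact ⟨v, h, Set.mem_insert _ _⟩
    · obtain ⟨u, hu, hadj⟩ := dom_of_max hS h
      exact ⟨u, hu, Set.mem_insert_iff.2 (Or.inr hadj)⟩
  obtain ⟨a, ha⟩ := hne
  rw [Set.ncard_eq_one]
  refine ⟨a, Set.eq_singleton_iff_unique_mem.2 ⟨ha, ?_⟩⟩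
  rintro b ⟨hbS, hbN⟩
  by_contra hab
  exact hS.1.2 b hbS a ha.1 (simplicial_adj hv hbN ha.2 hab)

private lemma zmod5_bound : ∀ F : Finset (ZMod 5), (∀ i ∈ F, i + 1 ∉ F) → F.card ≤ 2 := by
  decide

private lemma cyc5_count {S : Set V} (hS : IsMaxIndepOn G Set.univ S)
    {c : ZMod 5 → V} (hc : IsBasic5Cycle G c) : (S ∩ Set.range c).ncard = 2 := by
  obtain ⟨hcm, hbasic⟩ := hc
  have hinj := hcm.1
  have hne15 : ∀ i : ZMod 5, i - 1 ≠ i + 1 := by decide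
  have hcard : (S ∩ Set.range c).ncard = (c ⁻¹' S).ncard := by
    rw [← Set.image_preimage_eq_inter_range, Set.ncard_image_of_injective _ hinj]
  -- degree dichotomy
  have hdeg2 : ∀ i : ZMod 5, ¬ (3 ≤ deg G (c i)) → deg G (c i) = 2 := by
    intro i h
    have := cyc_two_le_deg hcm i (hne15 i)
    omega
  -- some vertex of degree 2 at i or i+1, for each i
  have hsome : ∀ i : ZMod 5, deg G (c i) = 2 ∨ deg G (c (i + 1)) = 2 := by
    intro i
    by_cases h : 3 ≤ deg G (c i)
    · right
      refine hdeg2 _ (fun h' => hbasic i ⟨h, h'⟩)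
    · left; exact hdeg2 _ h
  -- if a degree-2 cycle vertex is outside S, one of its cycle neighbours is in S
  have hkey : ∀ i : ZMod 5, deg G (c i) = 2 → c i ∉ S → c (i - 1) ∈ S ∨ c (i + 1) ∈ S := by
    intro i hdi hiS
    obtain ⟨u, huS, hu⟩ := dom_of_max hS hiS
    have hu' : u ∈ nbhd G (c i) := hu
    rw [cyc_nbhd_eq hcm i (hne15 i) hdi] at hu'
    rcases Set.mem_insert_iff.1 hu' with rfl | hu''
    · exact Or.inl huS
    · rw [Set.mem_singleton_iff] at hu''
      subst hu''
      exact Or.inr huS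
  have hub : (S ∩ Set.range c).ncard ≤ 2 := by
    rw [hcard]
    have hfin : (c ⁻¹' S).Finite := Set.toFinite _
    rw [Set.ncard_eq_toFinset_card _ hfin]
    apply zmod5_bound
    intro i hi hi1
    rw [Set.Finite.mem_toFinset] at hi hi1
    exact hS.1.2 _ hi _ hi1 (hcm.2 i)
  have hlb : 2 ≤ (S ∩ Set.range c).ncard := by
    by_contra hlt
    push_neg at hlt
    have h1 : (S ∩ Set.range c).ncard ≤ 1 := by omega
    rcases Set.eq_empty_or_nonempty (S ∩ Set.range c) with hemp | ⟨v, hvS, hvR⟩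
    · -- empty intersection
      obtain hdi | hdi := hsome 0
      · have h0S : c 0 ∉ S := fun h => (Set.eq_empty_iff_forall_notMem.1 hemp (c 0))
          ⟨h, Set.mem_range_self _⟩
        rcases hkey 0 hdi h0S with h | h
        · exact (Set.eq_empty_iff_forall_notMem.1 hemp (c (0 - 1))) ⟨h, Set.mem_range_self _⟩
        · exact (Set.eq_empty_iff_forall_notMem.1 hemp (c (0 + 1))) ⟨h, Set.mem_range_self _⟩
      · have h0S : c 1 ∉ S := fun h => (Set.eq_empty_iff_forall_notMem.1 hemp (c 1))
          ⟨h, Set.mem_range_self _⟩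
        rcases hkey 1 hdi h0S with h | h
        · exact (Set.eq_empty_iff_forall_notMem.1 hemp (c (1 - 1))) ⟨h, Set.mem_range_self _⟩
        · exact (Set.eq_empty_iff_forall_notMem.1 hemp (c (1 + 1))) ⟨h, Set.mem_range_self _⟩
    · -- singleton intersection
      obtain ⟨i0, rfl⟩ := hvR
      have huniq : ∀ w ∈ S ∩ Set.range c, w = c i0 := by
        intro w hw
        exact (Set.ncard_le_one_iff (Set.toFinite _)).1 h1 hw ⟨hvS, Set.mem_range_self _⟩
      have hkill : ∀ i : ZMod 5, deg G (c i) = 2 → i ≠ i0 → i - 1 ≠ i0 → i + 1 ≠ i0 → False := by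
        intro i hdi hi hi1 hi2
        have hiS : c i ∉ S := fun h => hi (hinj (huniq _ ⟨h, Set.mem_range_self _⟩))
        rcases hkey i hdi hiS with h | h
        · exact hi1 (hinj (huniq _ ⟨h, Set.mem_range_self _⟩))
        · exact hi2 (hinj (huniq _ ⟨h, Set.mem_range_self _⟩))
      have hfacts : ∀ j : ZMod 5, j + 2 ≠ j ∧ j + 2 - 1 ≠ j ∧ j + 2 + 1 ≠ j ∧
          j + 3 ≠ j ∧ j + 3 - 1 ≠ j ∧ j + 3 + 1 ≠ j := by decide
      obtain hdi | hdi := hsome (i0 + 2)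
      · exact hkill (i0 + 2) hdi (hfacts i0).1 (hfacts i0).2.1 (hfacts i0).2.2.1
      · have h23 : i0 + 2 + 1 = i0 + 3 := by ring
        rw [h23] at hdi
        exact hkill (i0 + 3) hdi (hfacts i0).2.2.2.1 (hfacts i0).2.2.2.2.1
          (hfacts i0).2.2.2.2.2
  omega

private lemma cyc4_count {S : Set V} (hS : IsMaxIndepOn G Set.univ S)
    {c : ZMod 4 → V} (hq : IsBasic4Cycle G c) : (S ∩ {c 0, c 1}).ncard = 1 := by
  obtain ⟨hcm, hd0, hd1, -, -⟩ := hq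
  have hadj01 : G.Adj (c 0) (c 1) := hcm.2 0
  have hne : (S ∩ {c 0, c 1}).Nonempty := by
    by_contra hemp
    rw [Set.not_nonempty_iff_eq_empty] at hemp
    have h0 : c 0 ∉ S := fun h =>
      (Set.eq_empty_iff_forall_notMem.1 hemp (c 0)) ⟨h, Set.mem_insert _ _⟩
    have h1 : c 1 ∉ S := fun h =>
      (Set.eq_empty_iff_forall_notMem.1 hemp (c 1))
        ⟨h, Set.mem_insert_iff.2 (Or.inr rfl)⟩
    obtain ⟨u, huS, hu⟩ := dom_of_max hS h0
    have hu' : u ∈ nbhd G (c 0) := hu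
    rw [cyc_nbhd_eq hcm 0 (by decide) hd0] at hu'
    have hu3 : u = c (0 - 1) := by
      rcases Set.mem_insert_iff.1 hu' with h | h
      · exact h
      · rw [Set.mem_singleton_iff] at h
        exact absurd (h ▸ huS) (by simpa using h1)
    obtain ⟨w, hwS, hw⟩ := dom_of_max hS h1
    have hw' : w ∈ nbhd G (c 1) := hw
    rw [cyc_nbhd_eq hcm 1 (by decide) hd1] at hw'
    have hw2 : w = c (1 + 1) := by
      rcases Set.mem_insert_iff.1 hw' with h | h
      · rw [(by decide : (1 : ZMod 4) - 1 = 0)] at h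
        exact absurd (h ▸ hwS) h0
      · rwa [Set.mem_singleton_iff] at h
    have hadj23 : G.Adj (c (1 + 1)) (c (0 - 1)) := by
      have := hcm.2 2
      rwa [(by decide : (1 : ZMod 4) + 1 = 2), (by decide : (0 : ZMod 4) - 1 = 2 + 1)]
    exact hS.1.2 w hwS u huS (hw2 ▸ hu3 ▸ hadj23)
  obtain ⟨a, ha⟩ := hne
  rw [Set.ncard_eq_one]
  refine ⟨a, Set.eq_singleton_iff_unique_mem.2 ⟨ha, ?_⟩⟩
  rintro b ⟨hbS, hbP⟩
  by_contra hab
  have haP := ha.2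
  have hadj : G.Adj b a := by
    rcases Set.mem_insert_iff.1 haP with ha0 | ha1
    · rcases Set.mem_insert_iff.1 hbP with hb0 | hb1
      · exact absurd (hb0.trans ha0.symm) hab
      · rw [Set.mem_singleton_iff] at hb1
        rw [ha0, hb1]
        exact hadj01.symm
    · rw [Set.mem_singleton_iff] at ha1
      rcases Set.mem_insert_iff.1 hbP with hb0 | hb1
      · rw [ha1, hb0]
        exact hadj01
      · rw [Set.mem_singleton_iff] at hb1
        exact absurd (hb1.trans ha1.symm) hab
  exact hS.1.2 b hbS a ha.1 hadj

end SQCHelpers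

private def pieceOf {V : Type*} (G : SimpleGraph V) {m s t : ℕ} (x : Fin m → V)
    (c : Fin s → ZMod 5 → V) (q : Fin t → ZMod 4 → V) : Fin m ⊕ Fin s ⊕ Fin t → Set V
  | Sum.inl i => closedNbhd G (x i)
  | Sum.inr (Sum.inl j) => Set.range (c j)
  | Sum.inr (Sum.inr k) => {q k 0, q k 1}

/-- If `G` is in the class `SQC`, with a partition of `V(G)` into
the closed neighborhoods of `m` simplicial vertices, the vertex sets of `s`
basic 5-cycles and the sets `B(Q)` of `t` basic 4-cycles, then `G` is
well-covered and `α(G) = m + 2s + t`. -/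
theorem stmt2 {V : Type*} [Fintype V] (G : SimpleGraph V)
    (m s t : ℕ) (x : Fin m → V) (c : Fin s → ZMod 5 → V) (q : Fin t → ZMod 4 → V)
    (hx : ∀ i, IsSimplicial G (x i))
    (hc : ∀ j, IsBasic5Cycle G (c j))
    (hq : ∀ k, IsBasic4Cycle G (q k))
    (hpart : ∀ v : V, ∃! p : Fin m ⊕ Fin s ⊕ Fin t,
      match p with
      | Sum.inl i => v ∈ closedNbhd G (x i)
      | Sum.inr (Sum.inl j) => v ∈ Set.range (c j)
      | Sum.inr (Sum.inr k) => v = q k 0 ∨ v = q k 1) :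
    WellCovered G ∧ _root_.indepNum G = m + 2 * s + t := by
  classical
  -- membership in pieces matches the partition predicate
  have hmem : ∀ (v : V) (p : Fin m ⊕ Fin s ⊕ Fin t),
      (match p with
        | Sum.inl i => v ∈ closedNbhd G (x i)
        | Sum.inr (Sum.inl j) => v ∈ Set.range (c j)
        | Sum.inr (Sum.inr k) => v = q k 0 ∨ v = q k 1) ↔ v ∈ pieceOf G x c q p := by
    intro v p
    rcases p with i | j | k <;> simp [pieceOf]
  have hpart' : ∀ v : V, ∃! p, v ∈ pieceOf G x c q p := by
    intro v
    obtain ⟨p, hp, hu⟩ := hpart v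
    exact ⟨p, (hmem v p).1 hp, fun y hy => hu y ((hmem v y).2 hy)⟩
  choose φ hφ1 hφ2 using hpart'
  -- every maximal independent set has cardinality m + 2s + t
  have key : ∀ S : Set V, IsMaxIndepOn G Set.univ S → S.ncard = m + 2 * s + t := by
    intro S hS
    have hfin : S.Finite := Set.toFinite S
    rw [Set.ncard_eq_toFinset_card _ hfin,
      Finset.card_eq_sum_card_fiberwise
        (f := φ) (t := (Finset.univ : Finset (Fin m ⊕ Fin s ⊕ Fin t)))
        (fun v _ => Finset.mem_univ _)]
    have hfib : ∀ p, (hfin.toFinset.filter (fun v => φ v = p)).card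
        = (S ∩ pieceOf G x c q p).ncard := by
      intro p
      rw [← Set.ncard_coe_finset]
      congr 1
      ext v
      simp only [Finset.coe_filter, Set.Finite.mem_toFinset, Set.mem_setOf_eq,
        Set.mem_inter_iff]
      constructor
      · rintro ⟨hv, rfl⟩
        exact ⟨hv, hφ1 v⟩
      · rintro ⟨hv, hp⟩
        exact ⟨hv, (hφ2 v p hp).symm⟩
    rw [Finset.sum_congr rfl (fun p _ => hfib p)]
    rw [Fintype.sum_sum_type, Fintype.sum_sum_type]
    have h1 : ∀ i : Fin m, (S ∩ pieceOf G x c q (Sum.inl i)).ncard = 1 :=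
      fun i => simplex_count hS (hx i)
    have h2 : ∀ j : Fin s, (S ∩ pieceOf G x c q (Sum.inr (Sum.inl j))).ncard = 2 :=
      fun j => cyc5_count hS (hc j)
    have h3 : ∀ k : Fin t, (S ∩ pieceOf G x c q (Sum.inr (Sum.inr k))).ncard = 1 :=
      fun k => cyc4_count hS (hq k)
    rw [Finset.sum_congr rfl (fun i _ => h1 i), Finset.sum_congr rfl (fun j _ => h2 j),
      Finset.sum_congr rfl (fun k _ => h3 k)]
    simp only [Finset.sum_const, Finset.card_univ, Fintype.card_fin, smul_eq_mul, mul_one]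
    omega
  constructor
  · intro S T hS hT
    rw [key S hS, key T hT]
  · -- independence number
    have hbdd : BddAbove {n : ℕ | ∃ S : Set V, IsIndep G S ∧ S.ncard = n} := by
      refine ⟨Fintype.card V, ?_⟩
      rintro n ⟨S, -, rfl⟩
      have := Set.ncard_le_ncard (Set.subset_univ S) (Set.toFinite _)
      rwa [Set.ncard_univ, Nat.card_eq_fintype_card] at this
    have hne : {n : ℕ | ∃ S : Set V, IsIndep G S ∧ S.ncard = n}.Nonempty := by
      refine ⟨0, ∅, ?_, Set.ncard_empty V⟩
      intro u hu
      exact absurd hu (Set.notMem_empty u)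
    obtain ⟨S, hSi, hScard⟩ := Nat.sSup_mem hne hbdd
    have hmax : IsMaxIndepOn G Set.univ S := by
      refine ⟨⟨Set.subset_univ _, hSi⟩, ?_⟩
      intro T hT hsub
      have hle : T.ncard ≤ sSup {n : ℕ | ∃ S : Set V, IsIndep G S ∧ S.ncard = n} :=
        le_csSup hbdd ⟨T, hT.2, rfl⟩
      exact Set.eq_of_subset_of_ncard_le hsub (hScard ▸ hle) (Set.toFinite T)
    rw [_root_.indepNum, ← hScard]
    exact key S hmax
end
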